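/- An edge-ordered graph of order chromatic number 2 is a semi-caterpillar if and only if it is connected and contains none of the edge-ordered paths P_4^{213}, P_5^{1342}, P_5^{1432}. -/

import Mathlib

set_option maxHeartbeats 1000000

/-- An edge-ordered graph: a finite simple graph together with an injective
real labeling of its edges (inducing a linear order on the edge set). -/
structure EOGraph (V : Type) [Fintype V] where
  graph : SimpleGraph V
  label : Sym2 V → ℝ
  inj : ∀ e ∈ graph.edgeSet, ∀ f ∈ graph.edgeSet, label e = label f → e = f

/-- `G` contains `H`: an injective, adjacency-preserving, edge-order-respecting map. -/
def EOContains {V W : Type} [Fintype V] [Fintype W] (G : EOGraph V) (H : EOGraph W) : Prop :=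
  ∃ f : W → V, Function.Injective f ∧
    (∀ a b, H.graph.Adj a b → G.graph.Adj (f a) (f b)) ∧
    ∀ e ∈ H.graph.edgeSet, ∀ e' ∈ H.graph.edgeSet,
      H.label e < H.label e' → G.label (Sym2.map f e) < G.label (Sym2.map f e')

/-- The Turán number `ex_<(n, H)`: the maximum number of edges of an
edge-ordered graph on `n` vertices avoiding `H`. -/
noncomputable def exLT {W : Type} [Fintype W] (n : ℕ) (H : EOGraph W) : ℕ :=
  sSup {m | ∃ G : EOGraph (Fin n), ¬ EOContains G H ∧ G.graph.edgeSet.ncard = m}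

/-- The reverse of an edge-ordered graph: same graph, reversed edge order. -/
def EOGraph.reverse {V : Type} [Fintype V] (G : EOGraph V) : EOGraph V where
  graph := G.graph
  label := fun e => - G.label e
  inj := fun e he f hf h => G.inj e he f hf (neg_inj.mp h)

/-- Two edges (as elements of `Sym2 V`) are adjacent if they share a vertex. -/
def EdgesAdjacent {V : Type} (e f : Sym2 V) : Prop := ∃ v, v ∈ e ∧ v ∈ f

/-- `e` and `f` are consecutive edges of `G`: `e < f` with no edge strictly in between. -/
def Consecutive {V : Type} [Fintype V] (G : EOGraph V) (e f : Sym2 V) : Prop :=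
  e ∈ G.graph.edgeSet ∧ f ∈ G.graph.edgeSet ∧ G.label e < G.label f ∧
    ¬ ∃ g ∈ G.graph.edgeSet, G.label e < G.label g ∧ G.label g < G.label f

/-- A semi-caterpillar: the underlying graph is a tree with at least one edge, and any
pair of consecutive edges is adjacent or directly connected by an edge larger than both. -/
def IsSemiCaterpillar {V : Type} [Fintype V] (G : EOGraph V) : Prop :=
  G.graph.IsTree ∧ G.graph.edgeSet.Nonempty ∧
  ∀ e f, Consecutive G e f →
    EdgesAdjacent e f ∨
    ∃ u v, s(u, v) ∈ G.graph.edgeSet ∧ u ∈ e ∧ v ∈ f ∧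
      G.label e < G.label s(u, v) ∧ G.label f < G.label s(u, v)

/-- The order chromatic number of `G` is at most `k`: there is a simple graph `H` with
chromatic number at most `k` all of whose edge-orderings contain `G`. -/
def OrderChromAtMost {V : Type} [Fintype V] (G : EOGraph V) (k : ℕ) : Prop :=
  ∃ (m : ℕ) (H : SimpleGraph (Fin m)), H.chromaticNumber ≤ (k : ℕ∞) ∧
    ∀ K : EOGraph (Fin m), K.graph = H → EOContains K G

/-- The order chromatic number of `G` equals 2. -/
def HasOrderChrom2 {V : Type} [Fintype V] (G : EOGraph V) : Prop :=
  OrderChromAtMost G 2 ∧ ¬ OrderChromAtMost G 1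

/-- A vertex is close if the edges incident to it form an interval in the edge order. -/
def CloseVertex {V : Type} [Fintype V] (G : EOGraph V) (v : V) : Prop :=
  ∀ e ∈ G.graph.edgeSet, ∀ f ∈ G.graph.edgeSet, ∀ g ∈ G.graph.edgeSet,
    v ∈ e → v ∈ g → G.label e ≤ G.label f → G.label f ≤ G.label g → v ∈ f

/-- An edge-ordered bigraph: an edge-ordered graph with a proper 2-coloring of the
vertices into left (`false`) and right (`true`) vertices. -/
structure EOBigraph (V : Type) [Fintype V] where
  toEOGraph : EOGraph V
  side : V → Bool
  proper : ∀ u v, toEOGraph.graph.Adj u v → side u ≠ side v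

/-- A right caterpillar: an edge-ordered bigraph whose underlying edge-ordered graph is a
semi-caterpillar and all of whose right vertices are close. -/
def IsRightCaterpillar {V : Type} [Fintype V] (B : EOBigraph V) : Prop :=
  IsSemiCaterpillar B.toEOGraph ∧ ∀ v, B.side v = true → CloseVertex B.toEOGraph v

/-- Containment of edge-ordered bigraphs: additionally sides must be preserved. -/
def BContains {V W : Type} [Fintype V] [Fintype W] (G : EOBigraph V) (H : EOBigraph W) : Prop :=
  ∃ f : W → V, Function.Injective f ∧
    (∀ a b, H.toEOGraph.graph.Adj a b → G.toEOGraph.graph.Adj (f a) (f b)) ∧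
    (∀ e ∈ H.toEOGraph.graph.edgeSet, ∀ e' ∈ H.toEOGraph.graph.edgeSet,
      H.toEOGraph.label e < H.toEOGraph.label e' →
        G.toEOGraph.label (Sym2.map f e) < G.toEOGraph.label (Sym2.map f e')) ∧
    ∀ a, G.side (f a) = H.side a

/-- Isomorphism of edge-ordered bigraphs. -/
def BIsoTo {V W : Type} [Fintype W] [Fintype V] (H : EOBigraph W) (G : EOBigraph V) : Prop :=
  ∃ f : W ≃ V, (∀ a b, H.toEOGraph.graph.Adj a b ↔ G.toEOGraph.graph.Adj (f a) (f b)) ∧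
    (∀ e ∈ H.toEOGraph.graph.edgeSet, ∀ e' ∈ H.toEOGraph.graph.edgeSet,
      (H.toEOGraph.label e < H.toEOGraph.label e' ↔
        G.toEOGraph.label (Sym2.map f e) < G.toEOGraph.label (Sym2.map f e'))) ∧
    ∀ a, G.side (f a) = H.side a

/-- Isomorphism of edge-ordered graphs. -/
def EOIsoTo {V W : Type} [Fintype W] [Fintype V] (H : EOGraph W) (G : EOGraph V) : Prop :=
  ∃ f : W ≃ V, (∀ a b, H.graph.Adj a b ↔ G.graph.Adj (f a) (f b)) ∧
    ∀ e ∈ H.graph.edgeSet, ∀ e' ∈ H.graph.edgeSet,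
      (H.label e < H.label e' ↔ G.label (Sym2.map f e) < G.label (Sym2.map f e'))

/-- The labeling of the path graph on `Fin k` in which the edge `{i, i+1}` gets label `w i`. -/
def pathLabel {k : ℕ} (w : Fin k → ℝ) : Sym2 (Fin k) → ℝ :=
  Sym2.lift ⟨fun i j => w (min i j), fun i j => by simp [min_comm]⟩

lemma pathGraph_edge_form {k : ℕ} {e : Sym2 (Fin k)}
    (he : e ∈ (SimpleGraph.pathGraph k).edgeSet) :
    ∃ i j : Fin k, e = s(i, j) ∧ (i : ℕ) + 1 = (j : ℕ) := by
  induction e using Sym2.inductionOn with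
  | hf a b =>
    rw [SimpleGraph.mem_edgeSet, SimpleGraph.pathGraph_adj] at he
    rcases he with h | h
    · exact ⟨a, b, rfl, h⟩
    · exact ⟨b, a, Sym2.eq_swap, h⟩

/-- The edge-ordered path on `k` vertices whose edge labels, listed along the path,
are `w 0, w 1, …, w (k-2)`. -/
def pathEO (k : ℕ) (w : Fin k → ℝ) (hw : Function.Injective w) : EOGraph (Fin k) where
  graph := SimpleGraph.pathGraph k
  label := pathLabel w
  inj := by
    intro e he f hf hef
    obtain ⟨i, j, rfl, hij⟩ := pathGraph_edge_form he
    obtain ⟨i', j', rfl, hij'⟩ := pathGraph_edge_form hf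
    have h1 : min i j = i := min_eq_left (Fin.le_def.mpr (by omega))
    have h2 : min i' j' = i' := min_eq_left (Fin.le_def.mpr (by omega))
    simp only [pathLabel, Sym2.lift_mk] at hef
    rw [h1, h2] at hef
    have hii : i = i' := hw hef
    have hjj : j = j' := Fin.ext (by omega)
    rw [hii, hjj]

/-- The edge-ordered path with natural-number labels. -/
def pathEON (k : ℕ) (v : Fin k → ℕ) (hv : Function.Injective v) : EOGraph (Fin k) :=
  pathEO k (fun i => (v i : ℝ)) (fun a b h => hv (Nat.cast_injective h))

/-- The bipartition of the edge-ordered path `pathEON k v hv`; the starting vertex is a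
right vertex iff `startRight` holds (right = `true`, left = `false`). -/
def pathEOBig (k : ℕ) (v : Fin k → ℕ) (hv : Function.Injective v) (startRight : Bool) :
    EOBigraph (Fin k) where
  toEOGraph := pathEON k v hv
  side := fun i => if i.val % 2 = 0 then startRight else !startRight
  proper := by
    intro a b hab
    have h : (SimpleGraph.pathGraph k).Adj a b := hab
    rw [SimpleGraph.pathGraph_adj] at h
    have hpar : (a.val % 2 = 0) ↔ ¬ (b.val % 2 = 0) := by omega
    by_cases ha : a.val % 2 = 0 <;> by_cases hb : b.val % 2 = 0 <;>
      simp_all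

def P4_213 : EOGraph (Fin 4) := pathEON 4 ![2,1,3,0] (by decide)
def P5_1342 : EOGraph (Fin 5) := pathEON 5 ![1,3,4,2,0] (by decide)
def P5_1432 : EOGraph (Fin 5) := pathEON 5 ![1,4,3,2,0] (by decide)
def P6_13254 : EOGraph (Fin 6) := pathEON 6 ![1,3,2,5,4,0] (by decide)
def P6_21354 : EOGraph (Fin 6) := pathEON 6 ![2,1,3,5,4,0] (by decide)
def P6plus_13254 : EOBigraph (Fin 6) := pathEOBig 6 ![1,3,2,5,4,0] (by decide) true
def P6minus_13254 : EOBigraph (Fin 6) := pathEOBig 6 ![1,3,2,5,4,0] (by decide) false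
def P5plus_2143 : EOBigraph (Fin 5) := pathEOBig 5 ![2,1,4,3,0] (by decide) true
def P5minus_2143 : EOBigraph (Fin 5) := pathEOBig 5 ![2,1,4,3,0] (by decide) false

/-- `B'` is an extension of `B`: it is obtained by adding new edges, each connecting an end
of the smallest edge `s(x,y)` of `B` to a new degree-1 vertex, all new edges being smaller
than `s(x,y)`, and all new edges at the left end being smaller than those at the right end. -/
def IsExtensionOf {V' V : Type} [Fintype V'] [Fintype V]
    (B' : EOBigraph V') (B : EOBigraph V) : Prop :=
  ∃ (ι : V → V') (x y : V),
    Function.Injective ι ∧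
    B.toEOGraph.graph.Adj x y ∧ B.side x = false ∧ B.side y = true ∧
    (∀ e ∈ B.toEOGraph.graph.edgeSet, B.toEOGraph.label s(x, y) ≤ B.toEOGraph.label e) ∧
    (∀ a b, B.toEOGraph.graph.Adj a b ↔ B'.toEOGraph.graph.Adj (ι a) (ι b)) ∧
    (∀ a, B'.side (ι a) = B.side a) ∧
    (∀ e ∈ B.toEOGraph.graph.edgeSet, ∀ f ∈ B.toEOGraph.graph.edgeSet,
      (B.toEOGraph.label e < B.toEOGraph.label f ↔
        B'.toEOGraph.label (Sym2.map ι e) < B'.toEOGraph.label (Sym2.map ι f))) ∧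
    (∀ w : V', w ∉ Set.range ι →
      (∃! u, B'.toEOGraph.graph.Adj w u) ∧
      (∀ u, B'.toEOGraph.graph.Adj w u → (u = ι x ∨ u = ι y) ∧
        B'.toEOGraph.label s(w, u) < B'.toEOGraph.label s(ι x, ι y))) ∧
    (∀ w w' : V', w ∉ Set.range ι → w' ∉ Set.range ι →
      B'.toEOGraph.graph.Adj w (ι x) → B'.toEOGraph.graph.Adj w' (ι y) →
      B'.toEOGraph.label s(w, ι x) < B'.toEOGraph.label s(w', ι y))

/-- A bundled edge-ordered bigraph (on some `Fin n`). -/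
structure BundledBigraph where
  n : ℕ
  big : EOBigraph (Fin n)

/-- `B` is (isomorphic to) `T₀`, the edge-ordered bigraph with one edge and two vertices. -/
def IsT0 {V : Type} [Fintype V] (B : EOBigraph V) : Prop :=
  Fintype.card V = 2 ∧ ∀ u v : V, u ≠ v → B.toEOGraph.graph.Adj u v

/-- `B` can be obtained (up to isomorphism) from `T₀` by a sequence of `i` extensions. -/
def ReachedInSteps {V : Type} [Fintype V] (i : ℕ) (B : EOBigraph V) : Prop :=
  ∃ f : ℕ → BundledBigraph, IsT0 (f 0).big ∧ BIsoTo (f i).big B ∧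
    ∀ j < i, IsExtensionOf (f (j+1)).big (f j).big

/-- The recursive depth of a right caterpillar: the minimum number of extension steps
needed to obtain it from `T₀`. -/
def HasRecursiveDepth {V : Type} [Fintype V] (B : EOBigraph V) (i : ℕ) : Prop :=
  ReachedInSteps i B ∧ ∀ j < i, ¬ ReachedInSteps j B

/-- An edge `e` (with left end `x` and right end `y`) is `c`-left-leaning: there are `c` edges
at `x` and `c` edges at `y` with every edge of the latter set larger than every edge of the
former, but smaller than `e`. -/
def LeftLeaning {V : Type} [Fintype V] (c : ℕ) (G : EOBigraph V) (e : Sym2 V) : Prop :=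
  ∃ x y : V, e = s(x, y) ∧ e ∈ G.toEOGraph.graph.edgeSet ∧
    G.side x = false ∧ G.side y = true ∧
    ∃ S S' : Finset (Sym2 V), S.card = c ∧ S'.card = c ∧
      (∀ f ∈ S, f ∈ G.toEOGraph.graph.edgeSet ∧ x ∈ f) ∧
      (∀ f ∈ S', f ∈ G.toEOGraph.graph.edgeSet ∧ y ∈ f) ∧
      (∀ f ∈ S, ∀ f' ∈ S', G.toEOGraph.label f < G.toEOGraph.label f') ∧
      (∀ f' ∈ S', G.toEOGraph.label f' < G.toEOGraph.label e)

/-- An edge `e` (with left end `x` and right end `y`) is `c`-right-leaning. -/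
def RightLeaning {V : Type} [Fintype V] (c : ℕ) (G : EOBigraph V) (e : Sym2 V) : Prop :=
  ∃ x y : V, e = s(x, y) ∧ e ∈ G.toEOGraph.graph.edgeSet ∧
    G.side x = false ∧ G.side y = true ∧
    ∃ S S' : Finset (Sym2 V), S.card = c ∧ S'.card = c ∧
      (∀ f ∈ S, f ∈ G.toEOGraph.graph.edgeSet ∧ x ∈ f) ∧
      (∀ f ∈ S', f ∈ G.toEOGraph.graph.edgeSet ∧ y ∈ f) ∧
      (∀ f' ∈ S', ∀ f ∈ S, G.toEOGraph.label f' < G.toEOGraph.label f) ∧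
      (∀ f ∈ S, G.toEOGraph.label f < G.toEOGraph.label e)

/-- The spanning sub-bigraph of `G` consisting of the edges satisfying `P`. -/
def bigraphRestrict {V : Type} [Fintype V] (G : EOBigraph V) (P : Sym2 V → Prop) :
    EOBigraph V where
  toEOGraph :=
    { graph := SimpleGraph.fromEdgeSet {e | e ∈ G.toEOGraph.graph.edgeSet ∧ P e}
      label := G.toEOGraph.label
      inj := by
        intro e he f hf h
        rw [SimpleGraph.edgeSet_fromEdgeSet] at he hf
        exact G.toEOGraph.inj e he.1.1 f hf.1.1 h }
  side := G.side
  proper := by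
    intro u v huv
    rw [SimpleGraph.fromEdgeSet_adj] at huv
    have h1 : s(u, v) ∈ G.toEOGraph.graph.edgeSet := huv.1.1
    exact G.proper u v ((SimpleGraph.mem_edgeSet _).mp h1)

/-- The spanning subgraph of the `c`-left-leaning edges. -/
def leftSub {V : Type} [Fintype V] (c : ℕ) (G : EOBigraph V) : EOBigraph V :=
  bigraphRestrict G (LeftLeaning c G)

/-- The spanning subgraph of the `c`-right-leaning edges. -/
def rightSub {V : Type} [Fintype V] (c : ℕ) (G : EOBigraph V) : EOBigraph V :=
  bigraphRestrict G (RightLeaning c G)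

/-- `G^{c-left}_i`: iteratively keep only `c`-left-leaning edges, `i` times. -/
def leftIter {V : Type} [Fintype V] (c i : ℕ) (G : EOBigraph V) : EOBigraph V :=
  (leftSub c)^[i] G

/-- `G^{c-right}_i`: iteratively keep only `c`-right-leaning edges, `i` times. -/
def rightIter {V : Type} [Fintype V] (c i : ℕ) (G : EOBigraph V) : EOBigraph V :=
  (rightSub c)^[i] G

/-- The set of labels of edges incident to `v`. -/
def incidentLabels {V : Type} [Fintype V] (G : EOGraph V) (v : V) : Set ℝ :=
  G.label '' {e | e ∈ G.graph.edgeSet ∧ v ∈ e}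

/-- The vertex label `l(v)`: the second smallest label among the edges incident to `v`
(meaningful when `v` has degree at least 2). -/
noncomputable def secondLabel {V : Type} [Fintype V] (G : EOGraph V) (v : V) : ℝ :=
  sInf (incidentLabels G v \ {sInf (incidentLabels G v)})

/-- `v` has degree at least 2. -/
def DegTwo {V : Type} [Fintype V] (G : EOGraph V) (v : V) : Prop :=
  2 ≤ {e | e ∈ G.graph.edgeSet ∧ v ∈ e}.ncard

/-- An edge `xy` (left end `x`, right end `y`) is left inclined if `l(x) < l(y) ≤ L(xy)`. -/
def LeftInclined {V : Type} [Fintype V] (G : EOBigraph V) (e : Sym2 V) : Prop :=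
  ∃ x y : V, e = s(x, y) ∧ e ∈ G.toEOGraph.graph.edgeSet ∧
    G.side x = false ∧ G.side y = true ∧
    DegTwo G.toEOGraph x ∧ DegTwo G.toEOGraph y ∧
    secondLabel G.toEOGraph x < secondLabel G.toEOGraph y ∧
    secondLabel G.toEOGraph y ≤ G.toEOGraph.label e

/-- An edge `xy` (left end `x`, right end `y`) is right inclined if `l(y) < l(x) ≤ L(xy)`. -/
def RightInclined {V : Type} [Fintype V] (G : EOBigraph V) (e : Sym2 V) : Prop :=
  ∃ x y : V, e = s(x, y) ∧ e ∈ G.toEOGraph.graph.edgeSet ∧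
    G.side x = false ∧ G.side y = true ∧
    DegTwo G.toEOGraph x ∧ DegTwo G.toEOGraph y ∧
    secondLabel G.toEOGraph y < secondLabel G.toEOGraph x ∧
    secondLabel G.toEOGraph x ≤ G.toEOGraph.label e

/-- `G_l`: the spanning sub-bigraph of the left inclined edges of `G`. -/
def inclinedLeftSub {V : Type} [Fintype V] (G : EOBigraph V) : EOBigraph V :=
  bigraphRestrict G (LeftInclined G)

/-- `G_r`: the spanning sub-bigraph of the right inclined edges of `G`. -/
def inclinedRightSub {V : Type} [Fintype V] (G : EOBigraph V) : EOBigraph V :=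
  bigraphRestrict G (RightInclined G)

/-- The underlying simple graph of `P` is a path. -/
def IsPathEO {V : Type} [Fintype V] (P : EOGraph V) : Prop :=
  ∃ (k : ℕ) (f : V ≃ Fin k), ∀ a b, P.graph.Adj a b ↔ (SimpleGraph.pathGraph k).Adj (f a) (f b)

/-- A monotone path: the labels increase (or decrease) monotonically along the path. -/
def IsMonotonePath {V : Type} [Fintype V] (P : EOGraph V) : Prop :=
  ∃ (k : ℕ) (w : Fin k → ℝ) (hw : Function.Injective w),
    (StrictMono w ∨ StrictAnti w) ∧ EOIsoTo (pathEO k w hw) P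

/-- A flipped path: obtained from a monotone path (with at least 3 edges) by swapping
either the two smallest or the two largest labels. -/
def IsFlippedPath {V : Type} [Fintype V] (P : EOGraph V) : Prop :=
  ∃ (k : ℕ) (hk : 4 ≤ k) (w : Fin k → ℝ) (hw : StrictMono w),
    EOIsoTo (pathEO k (w ∘ (Equiv.swap (⟨0, by omega⟩ : Fin k) ⟨1, by omega⟩))
      (hw.injective.comp (Equiv.injective _))) P ∨
    EOIsoTo (pathEO k (w ∘ (Equiv.swap (⟨k-3, by omega⟩ : Fin k) ⟨k-2, by omega⟩))
      (hw.injective.comp (Equiv.injective _))) P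

/-- 0-1 matrix containment: `A` contains `B` if `B` can be obtained from a submatrix of `A`
by possibly changing some 1 entries to 0. -/
def MContains {m n p q : ℕ} (A : Fin m → Fin n → Bool) (B : Fin p → Fin q → Bool) : Prop :=
  ∃ (r : Fin p → Fin m) (c : Fin q → Fin n), StrictMono r ∧ StrictMono c ∧
    ∀ i j, B i j = true → A (r i) (c j) = true

/-- The extremal function of a 0-1 matrix `B`: the maximum number of 1 entries in an
`n × n` 0-1 matrix avoiding `B`. -/
noncomputable def mex {p q : ℕ} (n : ℕ) (B : Fin p → Fin q → Bool) : ℕ :=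
  sSup {k | ∃ A : Fin n → Fin n → Bool, ¬ MContains A B ∧
    k = (Finset.univ.filter fun ij : Fin n × Fin n => A ij.1 ij.2 = true).card}

/-- The staircase with positions `p 0, …, p t` describes the matrix `A`. -/
def DescribedBy {nr nc : ℕ} (A : Fin nr → Fin nc → Bool) (t : ℕ)
    (p : Fin (t + 1) → Fin nr × Fin nc) : Prop :=
  (∀ k : Fin t,
      ((p k.succ).1.val = (p k.castSucc).1.val + 1 ∧ (p k.succ).2 = (p k.castSucc).2) ∨
      ((p k.succ).1 = (p k.castSucc).1 ∧ (p k.succ).2.val = (p k.castSucc).2.val + 1)) ∧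
  ∀ i j, A i j = true ↔
    ((∃ k, p k = (i, j)) ∨
     (i = (p 0).1 ∧ j < (p 0).2) ∨ (j = (p 0).2 ∧ i < (p 0).1) ∨
     (i = (p (Fin.last t)).1 ∧ (p (Fin.last t)).2 < j) ∨
     (j = (p (Fin.last t)).2 ∧ (p (Fin.last t)).1 < i))

/-- A staircase matrix: `A`, or `A` with the order of its columns reversed, is described
by a staircase. -/
def IsStaircaseMatrix {nr nc : ℕ} (A : Fin nr → Fin nc → Bool) : Prop :=
  (∃ t p, DescribedBy A t p) ∨ (∃ t p, DescribedBy (fun i j => A i j.rev) t p)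

/-- The bipartite graph whose bipartite adjacency matrix is `A`. -/
def MatrixGraph {nr nc : ℕ} (A : Fin nr → Fin nc → Bool) : SimpleGraph (Fin nr ⊕ Fin nc) :=
  SimpleGraph.fromRel fun u v =>
    match u, v with
    | .inl i, .inr j => A i j = true
    | _, _ => False

/-- A connected 0-1 matrix: the bipartite adjacency matrix of a connected graph. -/
def IsConnectedMatrix {nr nc : ℕ} (A : Fin nr → Fin nc → Bool) : Prop :=
  (MatrixGraph A).Connected

section Stmt8Aux

open SimpleGraph

variable {V : Type} [Fintype V]

private lemma sym2_rep {α : Type*} (z : Sym2 α) : ∃ x y, z = s(x, y) := by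
  induction z using Sym2.inductionOn with
  | hf x y => exact ⟨x, y, rfl⟩

private lemma label_ne (G : EOGraph V) {e f : Sym2 V} (he : e ∈ G.graph.edgeSet)
    (hf : f ∈ G.graph.edgeSet) (hne : e ≠ f) : G.label e ≠ G.label f :=
  fun h => hne (G.inj e he f hf h)

private lemma bool3 {x y z : Bool} (h1 : x ≠ y) (h2 : y ≠ z) (h3 : x ≠ z) : False := by
  cases x <;> cases y <;> cases z <;> simp_all

private lemma getVert_inj' {W : Type*} {G' : SimpleGraph W} {u v : W} (p : G'.Walk u v)
    (hp : p.IsPath) : ∀ i ≤ p.length, ∀ j ≤ p.length, p.getVert i = p.getVert j → i = j := by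
  induction p with
  | nil =>
    intro i hi j hj _
    simp only [SimpleGraph.Walk.length_nil, Nat.le_zero] at hi hj
    omega
  | @cons a b c h q ih =>
    rw [SimpleGraph.Walk.cons_isPath_iff] at hp
    intro i hi j hj hij
    rw [SimpleGraph.Walk.length_cons] at hi hj
    match i, j with
    | 0, 0 => rfl
    | 0, j + 1 =>
      exfalso
      apply hp.2
      rw [SimpleGraph.Walk.mem_support_iff_exists_getVert]
      refine ⟨j, ?_, by omega⟩
      have : (SimpleGraph.Walk.cons h q).getVert (j + 1) = q.getVert j :=
        SimpleGraph.Walk.getVert_cons_succ q h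
      rw [this] at hij
      rw [← hij]
      exact SimpleGraph.Walk.getVert_zero _
    | i + 1, 0 =>
      exfalso
      apply hp.2
      rw [SimpleGraph.Walk.mem_support_iff_exists_getVert]
      refine ⟨i, ?_, by omega⟩
      have : (SimpleGraph.Walk.cons h q).getVert (i + 1) = q.getVert i :=
        SimpleGraph.Walk.getVert_cons_succ q h
      rw [this] at hij
      rw [hij]
      exact SimpleGraph.Walk.getVert_zero _
    | i + 1, j + 1 =>
      have hrw : ∀ n, (SimpleGraph.Walk.cons h q).getVert (n + 1) = q.getVert n :=
        fun n => SimpleGraph.Walk.getVert_cons_succ q h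
      rw [hrw, hrw] at hij
      have := ih hp.1 i (by omega) j (by omega) hij
      omega

private lemma labval {k : ℕ} (v : Fin k → ℕ) (hv : Function.Injective v) (i j : Fin k)
    (hij : (i : ℕ) + 1 = (j : ℕ)) :
    (pathEON k v hv).label s(i, j) = (v i : ℝ) := by
  have h1 : min i j = i := min_eq_left (Fin.le_def.mpr (by omega))
  simp [pathEON, pathEO, pathLabel, h1]

private lemma pathEdge_mem {k : ℕ} (v : Fin k → ℕ) (hv : Function.Injective v) (i j : Fin k)
    (hij : (i : ℕ) + 1 = (j : ℕ)) :
    s(i, j) ∈ (pathEON k v hv).graph.edgeSet := by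
  rw [SimpleGraph.mem_edgeSet]
  exact SimpleGraph.pathGraph_adj.mpr (Or.inl hij)

private lemma containsPath (G : EOGraph V) {k : ℕ} (v : Fin k → ℕ) (hv : Function.Injective v)
    (vnat : ℕ → ℕ) (hcompat : ∀ t : Fin k, v t = vnat t.val)
    (q : ℕ → V)
    (hq : ∀ i < k, ∀ j < k, q i = q j → i = j)
    (hadj : ∀ i : ℕ, i + 1 < k → G.graph.Adj (q i) (q (i + 1)))
    (hord : ∀ i j : ℕ, i + 1 < k → j + 1 < k → vnat i < vnat j →
      G.label s(q i, q (i + 1)) < G.label s(q j, q (j + 1))) :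
    EOContains G (pathEON k v hv) := by
  refine ⟨fun t => q t.val, ?_, ?_, ?_⟩
  · intro x y hxy
    exact Fin.ext (hq x.val x.isLt y.val y.isLt hxy)
  · intro a b hab
    have hab' : (SimpleGraph.pathGraph k).Adj a b := hab
    rw [SimpleGraph.pathGraph_adj] at hab'
    have hbk := b.isLt
    have hak := a.isLt
    rcases hab' with h | h
    · show G.graph.Adj (q a.val) (q b.val)
      rw [show (b : ℕ) = (a : ℕ) + 1 from by omega]
      exact hadj a.val (by omega)
    · show G.graph.Adj (q a.val) (q b.val)
      rw [show (a : ℕ) = (b : ℕ) + 1 from by omega]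
      exact (hadj b.val (by omega)).symm
  · intro e he e' he' hlt
    obtain ⟨i, j, rfl, hij⟩ := pathGraph_edge_form he
    obtain ⟨i', j', rfl, hij'⟩ := pathGraph_edge_form he'
    rw [labval v hv i j hij, labval v hv i' j' hij'] at hlt
    have hvij : v i < v i' := by exact_mod_cast hlt
    rw [hcompat i, hcompat i'] at hvij
    have hjk := j.isLt
    have hjk' := j'.isLt
    rw [Sym2.map_pair_eq, Sym2.map_pair_eq]
    show G.label s(q i.val, q j.val) < G.label s(q i'.val, q j'.val)
    rw [show (j : ℕ) = (i : ℕ) + 1 from hij.symm, show (j' : ℕ) = (i' : ℕ) + 1 from hij'.symm]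
    exact hord i.val i'.val (by omega) (by omega) hvij

private lemma extractPath (G : EOGraph V) {k : ℕ} (hk : 0 < k) (v : Fin k → ℕ)
    (hv : Function.Injective v) (vnat : ℕ → ℕ) (hcompat : ∀ t : Fin k, v t = vnat t.val)
    (h : EOContains G (pathEON k v hv)) :
    ∃ q : ℕ → V,
      (∀ i < k, ∀ j < k, q i = q j → i = j) ∧
      (∀ i : ℕ, i + 1 < k → G.graph.Adj (q i) (q (i + 1))) ∧
      (∀ i j : ℕ, i + 1 < k → j + 1 < k → vnat i < vnat j →
        G.label s(q i, q (i + 1)) < G.label s(q j, q (j + 1))) := by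
  obtain ⟨f, hinj, hadj, hord⟩ := h
  refine ⟨fun n => f ⟨n % k, Nat.mod_lt _ hk⟩, ?_, ?_, ?_⟩
  · intro i hi j hj hij
    have := hinj hij
    have h2 : i % k = j % k := congrArg Fin.val this
    rwa [Nat.mod_eq_of_lt hi, Nat.mod_eq_of_lt hj] at h2
  · intro i hi
    have e1 : (⟨i % k, Nat.mod_lt _ hk⟩ : Fin k) = ⟨i, by omega⟩ :=
      Fin.ext (Nat.mod_eq_of_lt (by omega))
    have e2 : (⟨(i + 1) % k, Nat.mod_lt _ hk⟩ : Fin k) = ⟨i + 1, hi⟩ :=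
      Fin.ext (Nat.mod_eq_of_lt hi)
    show G.graph.Adj (f ⟨i % k, _⟩) (f ⟨(i + 1) % k, _⟩)
    rw [e1, e2]
    exact hadj _ _ (SimpleGraph.pathGraph_adj.mpr (Or.inl rfl))
  · intro i j hi hj hvij
    have e1 : (⟨i % k, Nat.mod_lt _ hk⟩ : Fin k) = ⟨i, by omega⟩ :=
      Fin.ext (Nat.mod_eq_of_lt (by omega))
    have e2 : (⟨(i + 1) % k, Nat.mod_lt _ hk⟩ : Fin k) = ⟨i + 1, hi⟩ :=
      Fin.ext (Nat.mod_eq_of_lt hi)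
    have e3 : (⟨j % k, Nat.mod_lt _ hk⟩ : Fin k) = ⟨j, by omega⟩ :=
      Fin.ext (Nat.mod_eq_of_lt (by omega))
    have e4 : (⟨(j + 1) % k, Nat.mod_lt _ hk⟩ : Fin k) = ⟨j + 1, hj⟩ :=
      Fin.ext (Nat.mod_eq_of_lt hj)
    show G.label s(f ⟨i % k, _⟩, f ⟨(i + 1) % k, _⟩) < G.label s(f ⟨j % k, _⟩, f ⟨(j + 1) % k, _⟩)
    rw [e1, e2, e3, e4]
    have hmem1 := pathEdge_mem v hv ⟨i, by omega⟩ ⟨i + 1, hi⟩ rfl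
    have hmem2 := pathEdge_mem v hv ⟨j, by omega⟩ ⟨j + 1, hj⟩ rfl
    have h1 := hord _ hmem1 _ hmem2
    rw [labval v hv ⟨i, by omega⟩ ⟨i + 1, hi⟩ rfl, labval v hv ⟨j, by omega⟩ ⟨j + 1, hj⟩ rfl] at h1
    have hv' : v ⟨i, by omega⟩ < v ⟨j, by omega⟩ := by
      rw [hcompat ⟨i, by omega⟩, hcompat ⟨j, by omega⟩]
      exact hvij
    have hfin := h1 (by exact_mod_cast hv')
    rwa [Sym2.map_pair_eq, Sym2.map_pair_eq] at hfin

end Stmt8Aux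

section Stmt8Aux2

open SimpleGraph

variable {V : Type} [Fintype V]

private def vn4 : ℕ → ℕ := fun n => if n = 0 then 2 else if n = 1 then 1 else if n = 2 then 3 else 0
private def vn5a : ℕ → ℕ := fun n =>
  if n = 0 then 1 else if n = 1 then 3 else if n = 2 then 4 else if n = 3 then 2 else 0
private def vn5b : ℕ → ℕ := fun n =>
  if n = 0 then 1 else if n = 1 then 4 else if n = 2 then 3 else if n = 3 then 2 else 0

private lemma vn4compat : ∀ t : Fin 4, (![2, 1, 3, 0] : Fin 4 → ℕ) t = vn4 t.val := by decide
private lemma vn5acompat : ∀ t : Fin 5, (![1, 3, 4, 2, 0] : Fin 5 → ℕ) t = vn5a t.val := by decide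
private lemma vn5bcompat : ∀ t : Fin 5, (![1, 4, 3, 2, 0] : Fin 5 → ℕ) t = vn5b t.val := by decide

private lemma cP4core (G : EOGraph V) (a b c d : V)
    (hab : G.graph.Adj a b) (hbc : G.graph.Adj b c) (hcd : G.graph.Adj c d)
    (hac : a ≠ c) (had : a ≠ d) (hbd : b ≠ d)
    (h1 : G.label s(b, c) < G.label s(a, b)) (h2 : G.label s(b, c) < G.label s(c, d))
    (h3 : G.label s(a, b) < G.label s(c, d)) :
    EOContains G P4_213 := by
  refine containsPath G ![2, 1, 3, 0] (by decide) vn4 vn4compat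
    (fun n => if n = 0 then a else if n = 1 then b else if n = 2 then c else d)
    ?_ ?_ ?_
  · intro i hi j hj hij
    have hi' : i = 0 ∨ i = 1 ∨ i = 2 ∨ i = 3 := by omega
    have hj' : j = 0 ∨ j = 1 ∨ j = 2 ∨ j = 3 := by omega
    rcases hi' with rfl | rfl | rfl | rfl <;> rcases hj' with rfl | rfl | rfl | rfl <;>
      first
        | rfl
        | exact absurd hij hab.ne
        | exact absurd hij.symm hab.ne
        | exact absurd hij hbc.ne
        | exact absurd hij.symm hbc.ne
        | exact absurd hij hcd.ne
        | exact absurd hij.symm hcd.ne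
        | exact absurd hij hac
        | exact absurd hij.symm hac
        | exact absurd hij had
        | exact absurd hij.symm had
        | exact absurd hij hbd
        | exact absurd hij.symm hbd
  · intro i hi
    have hi' : i = 0 ∨ i = 1 ∨ i = 2 := by omega
    rcases hi' with rfl | rfl | rfl
    · exact hab
    · exact hbc
    · exact hcd
  · intro i j hi hj hvij
    have hi' : i = 0 ∨ i = 1 ∨ i = 2 := by omega
    have hj' : j = 0 ∨ j = 1 ∨ j = 2 := by omega
    rcases hi' with rfl | rfl | rfl <;> rcases hj' with rfl | rfl | rfl <;>
      first
        | exact absurd hvij (by decide)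
        | exact h1
        | exact h2
        | exact h3

/-- Containment of `P4_213` from a concrete middle-minimal path. -/
private lemma cP4 (G : EOGraph V) (a b c d : V)
    (hab : G.graph.Adj a b) (hbc : G.graph.Adj b c) (hcd : G.graph.Adj c d)
    (hac : a ≠ c) (had : a ≠ d) (hbd : b ≠ d)
    (h1 : G.label s(b, c) < G.label s(a, b)) (h2 : G.label s(b, c) < G.label s(c, d)) :
    EOContains G P4_213 := by
  have hEab : s(a, b) ∈ G.graph.edgeSet := G.graph.mem_edgeSet.mpr hab
  have hEcd : s(c, d) ∈ G.graph.edgeSet := G.graph.mem_edgeSet.mpr hcd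
  have hne : s(a, b) ≠ s(c, d) := by
    intro hcontra
    rw [Sym2.eq_iff] at hcontra
    rcases hcontra with ⟨h, h'⟩ | ⟨h, h'⟩
    · exact hac h
    · exact had h
  rcases (label_ne G hEab hEcd hne).lt_or_gt with h3 | h3
  · exact cP4core G a b c d hab hbc hcd hac had hbd h1 h2 h3
  · refine cP4core G d c b a hcd.symm hbc.symm hab.symm
      (Ne.symm hbd) (Ne.symm had) (Ne.symm hac) ?_ ?_ ?_
    · rw [show s(c, b) = s(b, c) from Sym2.eq_swap, show s(d, c) = s(c, d) from Sym2.eq_swap]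
      exact h2
    · rw [show s(c, b) = s(b, c) from Sym2.eq_swap, show s(b, a) = s(a, b) from Sym2.eq_swap]
      exact h1
    · rw [show s(d, c) = s(c, d) from Sym2.eq_swap, show s(b, a) = s(a, b) from Sym2.eq_swap]
      exact h3

private lemma cP5core (G : EOGraph V) (q : ℕ → V)
    (hq : ∀ i < 5, ∀ j < 5, q i = q j → i = j)
    (hadj : ∀ i : ℕ, i + 1 < 5 → G.graph.Adj (q i) (q (i + 1)))
    (h12 : G.label s(q 0, q 1) < G.label s(q 1, q 2))
    (h13 : G.label s(q 0, q 1) < G.label s(q 2, q 3))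
    (h42 : G.label s(q 3, q 4) < G.label s(q 1, q 2))
    (h43 : G.label s(q 3, q 4) < G.label s(q 2, q 3))
    (h14 : G.label s(q 0, q 1) < G.label s(q 3, q 4)) :
    EOContains G P5_1342 ∨ EOContains G P5_1432 := by
  have hE : ∀ i : ℕ, i + 1 < 5 → s(q i, q (i + 1)) ∈ G.graph.edgeSet :=
    fun i hi => G.graph.mem_edgeSet.mpr (hadj i hi)
  have hne23 : s(q 1, q 2) ≠ s(q 2, q 3) := by
    intro hcontra
    rw [Sym2.eq_iff] at hcontra
    rcases hcontra with ⟨h, h'⟩ | ⟨h, h'⟩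
    · exact absurd (hq 1 (by omega) 2 (by omega) h) (by omega)
    · exact absurd (hq 1 (by omega) 3 (by omega) h) (by omega)
  rcases (label_ne G (hE 1 (by omega)) (hE 2 (by omega)) hne23).lt_or_gt with h23 | h23
  · left
    refine containsPath G ![1, 3, 4, 2, 0] (by decide) vn5a vn5acompat q hq hadj ?_
    intro i j hi hj hvij
    have hi' : i = 0 ∨ i = 1 ∨ i = 2 ∨ i = 3 := by omega
    have hj' : j = 0 ∨ j = 1 ∨ j = 2 ∨ j = 3 := by omega
    rcases hi' with rfl | rfl | rfl | rfl <;> rcases hj' with rfl | rfl | rfl | rfl <;>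
      first
        | exact absurd hvij (by decide)
        | exact h12 | exact h13 | exact h14 | exact h23 | exact h42 | exact h43
  · right
    refine containsPath G ![1, 4, 3, 2, 0] (by decide) vn5b vn5bcompat q hq hadj ?_
    intro i j hi hj hvij
    have hi' : i = 0 ∨ i = 1 ∨ i = 2 ∨ i = 3 := by omega
    have hj' : j = 0 ∨ j = 1 ∨ j = 2 ∨ j = 3 := by omega
    rcases hi' with rfl | rfl | rfl | rfl <;> rcases hj' with rfl | rfl | rfl | rfl <;>
      first
        | exact absurd hvij (by decide)
        | exact h12 | exact h13 | exact h14 | exact h23 | exact h42 | exact h43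

/-- Containment of one of the two `P5` patterns from a concrete path whose end edges are
both smaller than both middle edges. -/
private lemma cP5 (G : EOGraph V) (q : ℕ → V)
    (hq : ∀ i < 5, ∀ j < 5, q i = q j → i = j)
    (hadj : ∀ i : ℕ, i + 1 < 5 → G.graph.Adj (q i) (q (i + 1)))
    (h12 : G.label s(q 0, q 1) < G.label s(q 1, q 2))
    (h13 : G.label s(q 0, q 1) < G.label s(q 2, q 3))
    (h42 : G.label s(q 3, q 4) < G.label s(q 1, q 2))
    (h43 : G.label s(q 3, q 4) < G.label s(q 2, q 3)) :
    EOContains G P5_1342 ∨ EOContains G P5_1432 := by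
  have hE : ∀ i : ℕ, i + 1 < 5 → s(q i, q (i + 1)) ∈ G.graph.edgeSet :=
    fun i hi => G.graph.mem_edgeSet.mpr (hadj i hi)
  have hne14 : s(q 0, q 1) ≠ s(q 3, q 4) := by
    intro hcontra
    rw [Sym2.eq_iff] at hcontra
    rcases hcontra with ⟨h, h'⟩ | ⟨h, h'⟩
    · exact absurd (hq 0 (by omega) 3 (by omega) h) (by omega)
    · exact absurd (hq 0 (by omega) 4 (by omega) h) (by omega)
  rcases (label_ne G (hE 0 (by omega)) (hE 3 (by omega)) hne14).lt_or_gt with h14 | h14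
  · exact cP5core G q hq hadj h12 h13 h42 h43 h14
  · -- reverse the path
    have hrq : ∀ i < 5, ∀ j < 5, (fun n => q (4 - n)) i = (fun n => q (4 - n)) j → i = j := by
      intro i hi j hj hij
      have := hq (4 - i) (by omega) (4 - j) (by omega) hij
      omega
    have hradj : ∀ i : ℕ, i + 1 < 5 →
        G.graph.Adj ((fun n => q (4 - n)) i) ((fun n => q (4 - n)) (i + 1)) := by
      intro i hi
      show G.graph.Adj (q (4 - i)) (q (4 - (i + 1)))
      have h4 : 4 - i = (4 - (i + 1)) + 1 := by omega
      rw [h4]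
      exact (hadj (4 - (i + 1)) (by omega)).symm
    refine cP5core G (fun n => q (4 - n)) hrq hradj ?_ ?_ ?_ ?_ ?_
    · show G.label s(q 4, q 3) < G.label s(q 3, q 2)
      rw [show s(q 4, q 3) = s(q 3, q 4) from Sym2.eq_swap,
        show s(q 3, q 2) = s(q 2, q 3) from Sym2.eq_swap]
      exact h43
    · show G.label s(q 4, q 3) < G.label s(q 2, q 1)
      rw [show s(q 4, q 3) = s(q 3, q 4) from Sym2.eq_swap,
        show s(q 2, q 1) = s(q 1, q 2) from Sym2.eq_swap]
      exact h42
    · show G.label s(q 1, q 0) < G.label s(q 3, q 2)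
      rw [show s(q 1, q 0) = s(q 0, q 1) from Sym2.eq_swap,
        show s(q 3, q 2) = s(q 2, q 3) from Sym2.eq_swap]
      exact h13
    · show G.label s(q 1, q 0) < G.label s(q 2, q 1)
      rw [show s(q 1, q 0) = s(q 0, q 1) from Sym2.eq_swap,
        show s(q 2, q 1) = s(q 1, q 2) from Sym2.eq_swap]
      exact h12
    · show G.label s(q 4, q 3) < G.label s(q 1, q 0)
      rw [show s(q 4, q 3) = s(q 3, q 4) from Sym2.eq_swap,
        show s(q 1, q 0) = s(q 0, q 1) from Sym2.eq_swap]
      exact h14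

end Stmt8Aux2

section Stmt8Aux3

open SimpleGraph

variable {V : Type} [Fintype V]

/-- The pair condition of a semi-caterpillar. -/
private def SCpair (G : EOGraph V) : Prop :=
  ∀ e f, Consecutive G e f →
    EdgesAdjacent e f ∨
    ∃ u v, s(u, v) ∈ G.graph.edgeSet ∧ u ∈ e ∧ v ∈ f ∧
      G.label e < G.label s(u, v) ∧ G.label f < G.label s(u, v)

/-- The subgraph of edges with label greater than `t`. -/
private def gtGraph (G : EOGraph V) (t : ℝ) : SimpleGraph V :=
  SimpleGraph.fromEdgeSet {e | e ∈ G.graph.edgeSet ∧ t < G.label e}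

private lemma reach_in_edge (G : EOGraph V) (t : ℝ) {e : Sym2 V} (he : e ∈ G.graph.edgeSet)
    (ht : t < G.label e) {u w : V} (hu : u ∈ e) (hw : w ∈ e) :
    (gtGraph G t).Reachable u w := by
  obtain ⟨x, y, rfl⟩ := sym2_rep e
  have hxy : x ≠ y := by
    intro hcontra
    exact G.graph.not_isDiag_of_mem_edgeSet he (by simp [hcontra])
  have hadj : ∀ {p r : V}, p ∈ s(x, y) → r ∈ s(x, y) → p ≠ r → (gtGraph G t).Adj p r := by
    intro p r hp hr hpr
    rw [Sym2.mem_iff] at hp hr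
    have hpr' : s(p, r) = s(x, y) := by
      rcases hp with rfl | rfl <;> rcases hr with rfl | rfl <;>
        first | rfl | exact Sym2.eq_swap | exact absurd rfl hpr
    exact (SimpleGraph.fromEdgeSet_adj _).mpr ⟨by rw [hpr']; exact ⟨he, ht⟩, hpr⟩
  by_cases huw : u = w
  · rw [huw]
  · exact (hadj hu hw huw).reachable

private lemma reach_suffix_aux (G : EOGraph V) (hsc : SCpair G) (t : ℝ) :
    ∀ n : ℕ, ∀ e f : Sym2 V, e ∈ G.graph.edgeSet → f ∈ G.graph.edgeSet →
      t < G.label e → t < G.label f → G.label e ≤ G.label f →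
      {g | g ∈ G.graph.edgeSet ∧ G.label e < G.label g ∧ G.label g ≤ G.label f}.ncard = n →
      ∀ u ∈ e, ∀ w ∈ f, (gtGraph G t).Reachable u w := by
  intro n
  induction n using Nat.strong_induction_on with
  | _ n ih =>
    intro e f he hf hte htf hef hn u hu w hw
    rcases eq_or_lt_of_le hef with heq | hlt
    · have : e = f := G.inj e he f hf heq
      subst this
      exact reach_in_edge G t he hte hu hw
    · set S := {g | g ∈ G.graph.edgeSet ∧ G.label e < G.label g ∧ G.label g ≤ G.label f}
        with hS
      have hSfin : S.Finite := Set.Finite.subset (Set.toFinite G.graph.edgeSet)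
        (fun g hg => hg.1)
      have hSne : S.Nonempty := ⟨f, hf, hlt, le_refl _⟩
      obtain ⟨e', he'S, he'min⟩ := Set.exists_min_image S G.label hSfin hSne
      have hcons : Consecutive G e e' := by
        refine ⟨he, he'S.1, he'S.2.1, ?_⟩
        rintro ⟨g, hg, hg1, hg2⟩
        have hgS : g ∈ S := ⟨hg, hg1, le_of_lt (lt_of_lt_of_le hg2 he'S.2.2)⟩
        exact absurd (he'min g hgS) (not_le.mpr hg2)
      -- the measure for (e', f) is smaller
      have hsub : {g | g ∈ G.graph.edgeSet ∧ G.label e' < G.label g ∧ G.label g ≤ G.label f}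
          ⊂ S := by
        constructor
        · intro g hg
          exact ⟨hg.1, lt_trans he'S.2.1 hg.2.1, hg.2.2⟩
        · intro hcontra
          have := hcontra he'S
          exact absurd this.2.1 (lt_irrefl _)
      have hm : {g | g ∈ G.graph.edgeSet ∧ G.label e' < G.label g ∧ G.label g ≤ G.label f}.ncard
          < n := by
        rw [← hn]
        exact Set.ncard_lt_ncard hsub hSfin
      have hte' : t < G.label e' := lt_trans hte he'S.2.1
      have ih' : ∀ w' ∈ e', (gtGraph G t).Reachable w' w :=
        fun w' hw' => ih _ hm e' f he'S.1 hf hte' htf he'S.2.2 rfl w' hw' w hw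
      rcases hsc e e' hcons with hadj | ⟨x, y, hxy, hxe, hye', hg1, hg2⟩
      · obtain ⟨z, hze, hze'⟩ := hadj
        exact (reach_in_edge G t he hte hu hze).trans (ih' z hze')
      · have hxyne : x ≠ y := by
          intro hcontra
          exact G.graph.not_isDiag_of_mem_edgeSet hxy (by simp [hcontra])
        have hadjxy : (gtGraph G t).Adj x y :=
          (SimpleGraph.fromEdgeSet_adj _).mpr ⟨⟨hxy, lt_trans hte' hg2⟩, hxyne⟩
        exact ((reach_in_edge G t he hte hu hxe).trans hadjxy.reachable).trans (ih' y hye')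

private lemma reach_suffix (G : EOGraph V) (hsc : SCpair G) (t : ℝ)
    {e f : Sym2 V} (he : e ∈ G.graph.edgeSet) (hf : f ∈ G.graph.edgeSet)
    (hte : t < G.label e) (htf : t < G.label f) {u w : V} (hu : u ∈ e) (hw : w ∈ f) :
    (gtGraph G t).Reachable u w := by
  rcases le_total (G.label e) (G.label f) with h | h
  · exact reach_suffix_aux G hsc t _ e f he hf hte htf h rfl u hu w hw
  · exact (reach_suffix_aux G hsc t _ f e hf he htf hte h rfl w hw u hu).symm

/-- A semi-caterpillar does not contain `P4_213`. -/
private lemma noP4 (G : EOGraph V) (hsc : SCpair G) (hac : G.graph.IsAcyclic) :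
    ¬ EOContains G P4_213 := by
  intro h
  obtain ⟨q, hq, hadj, hord⟩ := extractPath G (by omega) ![2, 1, 3, 0] (by decide) vn4 vn4compat h
  have h1 : G.label s(q 1, q 2) < G.label s(q 0, q 1) :=
    hord 1 0 (by omega) (by omega) (by decide)
  have h2 : G.label s(q 1, q 2) < G.label s(q 2, q 3) :=
    hord 1 2 (by omega) (by omega) (by decide)
  have hadj12 : G.graph.Adj (q 1) (q 2) := hadj 1 (by omega)
  have hE01 : s(q 0, q 1) ∈ G.graph.edgeSet := G.graph.mem_edgeSet.mpr (hadj 0 (by omega))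
  have hE23 : s(q 2, q 3) ∈ G.graph.edgeSet := G.graph.mem_edgeSet.mpr (hadj 2 (by omega))
  set t := G.label s(q 1, q 2) with ht
  have hreach : (gtGraph G t).Reachable (q 1) (q 2) :=
    reach_suffix G hsc t hE01 hE23 h1 h2 (Sym2.mem_mk_right _ _) (Sym2.mem_mk_left _ _)
  have hbr := (SimpleGraph.isAcyclic_iff_forall_adj_isBridge.mp hac) hadj12
  rw [SimpleGraph.isBridge_iff] at hbr
  apply (hbr : ¬ (G.graph \ SimpleGraph.fromEdgeSet {s(q 1, q 2)}).Reachable (q 1) (q 2))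
  refine hreach.mono ?_
  intro x y hxy
  rw [gtGraph, SimpleGraph.fromEdgeSet_adj] at hxy
  rw [SimpleGraph.deleteEdges, SimpleGraph.sdiff_adj]
  refine ⟨(SimpleGraph.mem_edgeSet _).mp hxy.1.1, ?_⟩
  rw [SimpleGraph.fromEdgeSet_adj]
  rintro ⟨hmem, -⟩
  rw [Set.mem_singleton_iff] at hmem
  have : G.label s(x, y) = t := by rw [hmem]
  exact absurd this (ne_of_gt hxy.1.2)

/-- An EOGraph with no edges has order chromatic number at most 1. -/
private lemma edges_nonempty (G : EOGraph V) (h2 : HasOrderChrom2 G) :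
    G.graph.edgeSet.Nonempty := by
  by_contra hemp
  rw [Set.not_nonempty_iff_eq_empty] at hemp
  apply h2.2
  refine ⟨Fintype.card V, ⊥, ?_, ?_⟩
  · rw [SimpleGraph.chromaticNumber_le_iff_colorable]
    exact ⟨⟨fun _ => 0, fun {a b} hab => absurd hab (by simp)⟩⟩
  · intro K hK
    refine ⟨Fintype.equivFin V, (Fintype.equivFin V).injective, ?_, ?_⟩
    · intro a b hab
      have : s(a, b) ∈ G.graph.edgeSet := G.graph.mem_edgeSet.mpr hab
      rw [hemp] at this
      exact absurd this (Set.notMem_empty _)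
    · intro e he
      rw [hemp] at he
      exact absurd he (Set.notMem_empty _)

end Stmt8Aux3

section Stmt8Aux4

open SimpleGraph

variable {V : Type} [Fintype V]

private lemma natlex_le {x y p q m : ℕ} (hq : q < m) (h : x * m + y ≤ p * m + q) : x ≤ p := by
  by_contra hc
  push_neg at hc
  have h5 : p * m + m ≤ x * m := by
    calc p * m + m = (p + 1) * m := by ring
      _ ≤ x * m := Nat.mul_le_mul_right m hc
  omega

private lemma natlex_eq {x1 y1 x2 y2 m : ℕ} (h1 : y1 < m) (h2 : y2 < m)
    (h : x1 * m + y1 = x2 * m + y2) : x1 = x2 ∧ y1 = y2 := by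
  have hx : x1 = x2 := le_antisymm (natlex_le h2 h.le) (natlex_le h1 h.ge)
  subst hx
  exact ⟨rfl, by omega⟩

/-- From order chromatic number two, a proper 2-colouring of `G` in which every
vertex on the `false` side is close. -/
private lemma lex_coloring (G : EOGraph V) (h2 : HasOrderChrom2 G) :
    ∃ cc : V → Bool, (∀ a b, G.graph.Adj a b → cc a ≠ cc b) ∧
      ∀ w, cc w = false → CloseVertex G w := by
  classical
  obtain ⟨⟨m, H, hchrom, hall⟩, -⟩ := h2
  have hcol : H.Colorable 2 := SimpleGraph.chromaticNumber_le_iff_colorable.mp hchrom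
  obtain ⟨C⟩ := hcol
  set cb : Fin m → Bool := fun u => decide (C u = 1) with hcb
  have hCp : ∀ a b : Fin m, H.Adj a b → cb a ≠ cb b := by
    intro a b hab hcontra
    apply C.valid hab
    have hkey : ∀ x y : Fin 2, decide (x = 1) = decide (y = 1) → x = y := by decide
    exact hkey _ _ hcontra
  set lab : Sym2 (Fin m) → ℝ := Sym2.lift ⟨fun u w =>
      if cb u = cb w then 0
      else if cb u then (((w : ℕ) * m + (u : ℕ) : ℕ) : ℝ)
      else (((u : ℕ) * m + (w : ℕ) : ℕ) : ℝ), by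
    intro u w
    by_cases h1 : cb u <;> by_cases h2 : cb w <;> simp [h1, h2]⟩ with hlab
  have hlabval : ∀ x y : Fin m, cb x = false → cb y = true →
      lab s(x, y) = (((x : ℕ) * m + (y : ℕ) : ℕ) : ℝ) := by
    intro x y hx hy
    rw [hlab, Sym2.lift_mk]
    show (if cb x = cb y then (0 : ℝ) else if cb x = true then (((y : ℕ) * m + (x : ℕ) : ℕ) : ℝ)
      else (((x : ℕ) * m + (y : ℕ) : ℕ) : ℝ)) = _
    rw [hx, hy]
    simp
  have hform : ∀ e ∈ H.edgeSet, ∃ x y : Fin m, e = s(x, y) ∧ cb x = false ∧ cb y = true := by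
    intro e he
    obtain ⟨u, w, rfl⟩ := sym2_rep e
    have hadj : H.Adj u w := (H.mem_edgeSet).mp he
    have hne := hCp u w hadj
    cases hu : cb u
    · refine ⟨u, w, rfl, hu, ?_⟩
      cases hw : cb w
      · rw [hu, hw] at hne; exact absurd rfl hne
      · rfl
    · refine ⟨w, u, Sym2.eq_swap, ?_, hu⟩
      cases hw : cb w
      · rfl
      · rw [hu, hw] at hne; exact absurd rfl hne
  have hKinj : ∀ e ∈ H.edgeSet, ∀ f ∈ H.edgeSet, lab e = lab f → e = f := by
    intro e he f hf hef
    obtain ⟨x1, y1, rfl, hx1, hy1⟩ := hform e he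
    obtain ⟨x2, y2, rfl, hx2, hy2⟩ := hform f hf
    rw [hlabval x1 y1 hx1 hy1, hlabval x2 y2 hx2 hy2] at hef
    have hef' : (x1 : ℕ) * m + (y1 : ℕ) = (x2 : ℕ) * m + (y2 : ℕ) := by exact_mod_cast hef
    obtain ⟨hx, hy⟩ := natlex_eq y1.isLt y2.isLt hef'
    rw [show x1 = x2 from Fin.ext hx, show y1 = y2 from Fin.ext hy]
  obtain ⟨femb, hfinj, hfadj, hford⟩ := hall ⟨H, lab, hKinj⟩ rfl
  have hford' : ∀ e ∈ G.graph.edgeSet, ∀ e' ∈ G.graph.edgeSet,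
      G.label e < G.label e' → lab (Sym2.map femb e) < lab (Sym2.map femb e') := hford
  refine ⟨fun v => cb (femb v), ?_, ?_⟩
  · intro a b hab
    exact hCp _ _ (hfadj a b hab)
  · intro w hw e he f hf g hg hwe hwg hef hfg
    have hw' : cb (femb w) = false := hw
    rcases eq_or_lt_of_le hef with heq | hef'
    · rw [G.inj e he f hf heq] at hwe; exact hwe
    rcases eq_or_lt_of_le hfg with heq | hfg'
    · rw [G.inj f hf g hg heq]; exact hwg
    obtain ⟨u1, hequ1⟩ := Sym2.mem_iff_exists.mp hwe
    obtain ⟨u2, hequ2⟩ := Sym2.mem_iff_exists.mp hwg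
    subst hequ1
    subst hequ2
    have h1 := hford' _ he _ hf hef'
    have h2 := hford' _ hf _ hg hfg'
    rw [Sym2.map_pair_eq] at h1 h2
    have hadj1 : G.graph.Adj w u1 := (G.graph.mem_edgeSet).mp he
    have hadj2 : G.graph.Adj w u2 := (G.graph.mem_edgeSet).mp hg
    have hcbu1 : cb (femb u1) = true := by
      cases h : cb (femb u1)
      · exact absurd (by rw [hw', h]) (hCp _ _ (hfadj _ _ hadj1))
      · rfl
    have hcbu2 : cb (femb u2) = true := by
      cases h : cb (femb u2)
      · exact absurd (by rw [hw', h]) (hCp _ _ (hfadj _ _ hadj2))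
      · rfl
    rw [hlabval _ _ hw' hcbu1] at h1
    rw [hlabval _ _ hw' hcbu2] at h2
    obtain ⟨p, r, rfl⟩ := sym2_rep f
    have hadjf : G.graph.Adj p r := (G.graph.mem_edgeSet).mp hf
    have hnef := hCp _ _ (hfadj _ _ hadjf)
    rw [Sym2.map_pair_eq] at h1 h2
    cases hp : cb (femb p)
    · have hr : cb (femb r) = true := by
        cases h : cb (femb r)
        · exact absurd (hp.trans h.symm) hnef
        · rfl
      rw [hlabval _ _ hp hr] at h1 h2
      have h1' : (femb w : ℕ) * m + (femb u1 : ℕ) < (femb p : ℕ) * m + (femb r : ℕ) := by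
        exact_mod_cast h1
      have h2' : (femb p : ℕ) * m + (femb r : ℕ) < (femb w : ℕ) * m + (femb u2 : ℕ) := by
        exact_mod_cast h2
      have hle1 : (femb w : ℕ) ≤ (femb p : ℕ) := natlex_le (femb r).isLt h1'.le
      have hle2 : (femb p : ℕ) ≤ (femb w : ℕ) := natlex_le (femb u2).isLt h2'.le
      have : p = w := hfinj (Fin.ext (le_antisymm hle2 hle1))
      rw [← this]
      exact Sym2.mem_mk_left _ _
    · have hr : cb (femb r) = false := by
        cases h : cb (femb r)
        · rfl
        · exact absurd (hp.trans h.symm) hnef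
      rw [show s(femb p, femb r) = s(femb r, femb p) from Sym2.eq_swap,
        hlabval _ _ hr hp] at h1 h2
      have h1' : (femb w : ℕ) * m + (femb u1 : ℕ) < (femb r : ℕ) * m + (femb p : ℕ) := by
        exact_mod_cast h1
      have h2' : (femb r : ℕ) * m + (femb p : ℕ) < (femb w : ℕ) * m + (femb u2 : ℕ) := by
        exact_mod_cast h2
      have hle1 : (femb w : ℕ) ≤ (femb r : ℕ) := natlex_le (femb p).isLt h1'.le
      have hle2 : (femb r : ℕ) ≤ (femb w : ℕ) := natlex_le (femb u2).isLt h2'.le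
      have : r = w := hfinj (Fin.ext (le_antisymm hle2 hle1))
      rw [← this]
      exact Sym2.mem_mk_right _ _

end Stmt8Aux4

section Stmt8Aux5

open SimpleGraph

variable {V : Type} [Fintype V]

/-- The key cut-and-closeness argument. -/
private lemma core (G : EOGraph V) (hsc : SCpair G) {a1 a2 : V}
    (hclose : CloseVertex G a2) (hf2 : s(a1, a2) ∈ G.graph.edgeSet)
    (hbr : ¬ (G.graph \ SimpleGraph.fromEdgeSet {s(a1, a2)}).Reachable a2 a1)
    {e f : Sym2 V} (he : e ∈ G.graph.edgeSet) (hf : f ∈ G.graph.edgeSet)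
    (ha1e : a1 ∈ e) (ha2e : a2 ∉ e) (ha2f : a2 ∉ f)
    {a3 : V} (ha3f : a3 ∈ f)
    (hra3 : (G.graph \ SimpleGraph.fromEdgeSet {s(a1, a2)}).Reachable a2 a3)
    (hef : G.label e < G.label f) (hff2 : G.label f < G.label s(a1, a2)) : False := by
  classical
  set Del := G.graph \ SimpleGraph.fromEdgeSet {s(a1, a2)} with hDel
  have hprop : ∀ g ∈ G.graph.edgeSet, g ≠ s(a1, a2) → ∀ u ∈ g, ∀ v ∈ g,
      Del.Reachable a2 u → Del.Reachable a2 v := by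
    intro g hg hgne u hu v hv hRu
    obtain ⟨x, y, rfl⟩ := sym2_rep g
    have hadjG : G.graph.Adj x y := (G.graph.mem_edgeSet).mp hg
    have hDadj : Del.Adj x y := by
      rw [hDel, SimpleGraph.sdiff_adj]
      refine ⟨hadjG, ?_⟩
      rw [SimpleGraph.fromEdgeSet_adj]
      rintro ⟨hmem, -⟩
      exact hgne (Set.mem_singleton_iff.mp hmem)
    rw [Sym2.mem_iff] at hu hv
    have hreach_uv : Del.Reachable u v := by
      rcases hu with rfl | rfl <;> rcases hv with rfl | rfl
      · exact SimpleGraph.Reachable.refl _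
      · exact hDadj.reachable
      · exact hDadj.symm.reachable
      · exact SimpleGraph.Reachable.refl _
    exact hRu.trans hreach_uv
  have hside_e : ¬ ∃ v ∈ e, Del.Reachable a2 v := by
    rintro ⟨v, hv, hRv⟩
    have hene : e ≠ s(a1, a2) := fun hcontra => ha2e (by rw [hcontra]; exact Sym2.mem_mk_right _ _)
    exact hbr (hprop e he hene v hv a1 ha1e hRv)
  set M := {g | g ∈ G.graph.edgeSet ∧ G.label e ≤ G.label g ∧ G.label g ≤ G.label f ∧
    ∃ v ∈ g, Del.Reachable a2 v} with hM
  have hfM : f ∈ M := ⟨hf, le_of_lt hef, le_refl _, a3, ha3f, hra3⟩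
  obtain ⟨gs, hgsM, hgsmin⟩ := Set.exists_min_image M G.label
    (Set.Finite.subset (Set.toFinite G.graph.edgeSet) fun g hg => hg.1) ⟨f, hfM⟩
  have hgse : G.label e < G.label gs := by
    rcases eq_or_lt_of_le hgsM.2.1 with heq | h
    · exfalso
      apply hside_e
      have heq2 : e = gs := G.inj _ he _ hgsM.1 heq
      rw [heq2]
      exact hgsM.2.2.2
    · exact h
  set N := {g | g ∈ G.graph.edgeSet ∧ G.label e ≤ G.label g ∧ G.label g < G.label gs} with hN
  have heN : e ∈ N := ⟨he, le_refl _, hgse⟩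
  obtain ⟨p, hpN, hpmax⟩ := Set.exists_max_image N G.label
    (Set.Finite.subset (Set.toFinite G.graph.edgeSet) fun g hg => hg.1) ⟨e, heN⟩
  have hside_p : ¬ ∃ v ∈ p, Del.Reachable a2 v := by
    rintro ⟨v, hv, hRv⟩
    have hpM : p ∈ M := ⟨hpN.1, hpN.2.1, le_trans (le_of_lt hpN.2.2) hgsM.2.2.1, v, hv, hRv⟩
    exact absurd (hgsmin p hpM) (not_le.mpr hpN.2.2)
  have hcons : Consecutive G p gs := by
    refine ⟨hpN.1, hgsM.1, hpN.2.2, ?_⟩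
    rintro ⟨g, hg, hg1, hg2⟩
    have hgN : g ∈ N := ⟨hg, le_trans hpN.2.1 (le_of_lt hg1), hg2⟩
    exact absurd (hpmax g hgN) (not_le.mpr hg1)
  have hgsne2 : gs ≠ s(a1, a2) := by
    intro hcontra
    have heq : G.label gs = G.label s(a1, a2) := by rw [hcontra]
    exact absurd heq (ne_of_lt (lt_of_le_of_lt hgsM.2.2.1 hff2))
  have ha2gs : a2 ∈ gs := by
    rcases hsc p gs hcons with hadj | ⟨x, y, hxy, hxp, hygs, hg1, hg2⟩
    · exfalso
      obtain ⟨v, hvp, hvgs⟩ := hadj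
      obtain ⟨w, hwgs, hRw⟩ := hgsM.2.2.2
      exact hside_p ⟨v, hvp, hprop gs hgsM.1 hgsne2 w hwgs v hvgs hRw⟩
    · obtain ⟨w, hwgs, hRw⟩ := hgsM.2.2.2
      have hRy : Del.Reachable a2 y := hprop gs hgsM.1 hgsne2 w hwgs y hygs hRw
      have hRxn : ¬ Del.Reachable a2 x := fun hRx => hside_p ⟨x, hxp, hRx⟩
      have hxyeq : s(x, y) = s(a1, a2) := by
        by_contra hne
        exact hRxn (hprop s(x, y) hxy hne y (Sym2.mem_mk_right _ _) x (Sym2.mem_mk_left _ _) hRy)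
      rw [Sym2.eq_iff] at hxyeq
      rcases hxyeq with ⟨hx, hy⟩ | ⟨hx, hy⟩
      · rw [← hy]; exact hygs
      · exfalso
        apply hRxn
        rw [hx]
  have hgsf : gs ≠ f := fun hcontra => ha2f (by rw [← hcontra]; exact ha2gs)
  have hlt' : G.label gs < G.label f :=
    lt_of_le_of_ne hgsM.2.2.1 (label_ne G hgsM.1 hf hgsf)
  exact ha2f (hclose gs hgsM.1 f hf s(a1, a2) hf2 ha2gs (Sym2.mem_mk_right _ _)
    (le_of_lt hlt') (le_of_lt hff2))

private lemma noP5config (G : EOGraph V) (hsc : SCpair G) (hac : G.graph.IsAcyclic)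
    (cc : V → Bool) (hccp : ∀ a b, G.graph.Adj a b → cc a ≠ cc b)
    (hccc : ∀ w, cc w = false → CloseVertex G w)
    (q : ℕ → V)
    (hq : ∀ i < 5, ∀ j < 5, q i = q j → i = j)
    (hadj : ∀ i : ℕ, i + 1 < 5 → G.graph.Adj (q i) (q (i + 1)))
    (h14 : G.label s(q 0, q 1) < G.label s(q 3, q 4))
    (h42 : G.label s(q 3, q 4) < G.label s(q 1, q 2))
    (h43 : G.label s(q 3, q 4) < G.label s(q 2, q 3)) : False := by
  have hE : ∀ i : ℕ, i + 1 < 5 → s(q i, q (i + 1)) ∈ G.graph.edgeSet :=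
    fun i hi => G.graph.mem_edgeSet.mpr (hadj i hi)
  cases hc1 : cc (q 1)
  · -- q 1 is close
    have hcl := hccc (q 1) hc1
    have hmem := hcl s(q 0, q 1) (hE 0 (by omega)) s(q 3, q 4) (hE 3 (by omega))
      s(q 1, q 2) (hE 1 (by omega)) (Sym2.mem_mk_right _ _) (Sym2.mem_mk_left _ _)
      (le_of_lt h14) (le_of_lt h42)
    rw [Sym2.mem_iff] at hmem
    rcases hmem with h | h
    · exact absurd (hq 1 (by omega) 3 (by omega) h) (by omega)
    · exact absurd (hq 1 (by omega) 4 (by omega) h) (by omega)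
  · -- q 2 is close
    have hc2 : cc (q 2) = false := by
      have hne := hccp (q 1) (q 2) (hadj 1 (by omega))
      cases h : cc (q 2)
      · rfl
      · rw [hc1, h] at hne; exact absurd rfl hne
    have hcl := hccc (q 2) hc2
    have hbr0 := (SimpleGraph.isAcyclic_iff_forall_adj_isBridge.mp hac) (hadj 1 (by omega))
    rw [SimpleGraph.isBridge_iff] at hbr0
    have hbr : ¬ (G.graph \ SimpleGraph.fromEdgeSet {s(q 1, q 2)}).Reachable (q 2) (q 1) :=
      fun h => hbr0 h.symm
    have hra3 : (G.graph \ SimpleGraph.fromEdgeSet {s(q 1, q 2)}).Reachable (q 2) (q 3) := by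
      refine SimpleGraph.Adj.reachable ?_
      rw [SimpleGraph.sdiff_adj]
      refine ⟨hadj 2 (by omega), ?_⟩
      rw [SimpleGraph.fromEdgeSet_adj]
      rintro ⟨hmem, -⟩
      rw [Set.mem_singleton_iff, Sym2.eq_iff] at hmem
      rcases hmem with ⟨ha, hb⟩ | ⟨ha, hb⟩
      · exact absurd (hq 2 (by omega) 1 (by omega) ha) (by omega)
      · exact absurd (hq 3 (by omega) 1 (by omega) hb) (by omega)
    have ha2e : q 2 ∉ s(q 0, q 1) := by
      rw [Sym2.mem_iff]
      rintro (h | h)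
      · exact absurd (hq 2 (by omega) 0 (by omega) h) (by omega)
      · exact absurd (hq 2 (by omega) 1 (by omega) h) (by omega)
    have ha2f : q 2 ∉ s(q 3, q 4) := by
      rw [Sym2.mem_iff]
      rintro (h | h)
      · exact absurd (hq 2 (by omega) 3 (by omega) h) (by omega)
      · exact absurd (hq 2 (by omega) 4 (by omega) h) (by omega)
    exact core G hsc hcl (hE 1 (by omega)) hbr (hE 0 (by omega)) (hE 3 (by omega))
      (Sym2.mem_mk_right _ _) ha2e ha2f (Sym2.mem_mk_left _ _) hra3 h14 h42

/-- A semi-caterpillar with a close side avoids both `P5` patterns. -/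
private lemma noP5a (G : EOGraph V) (hsc : SCpair G) (hac : G.graph.IsAcyclic)
    (cc : V → Bool) (hccp : ∀ a b, G.graph.Adj a b → cc a ≠ cc b)
    (hccc : ∀ w, cc w = false → CloseVertex G w) :
    ¬ EOContains G P5_1342 := by
  intro h
  obtain ⟨q, hq, hadj, hord⟩ := extractPath G (by omega) ![1, 3, 4, 2, 0] (by decide)
    vn5a vn5acompat h
  exact noP5config G hsc hac cc hccp hccc q hq hadj
    (hord 0 3 (by omega) (by omega) (by decide))
    (hord 3 1 (by omega) (by omega) (by decide))
    (hord 3 2 (by omega) (by omega) (by decide))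

private lemma noP5b (G : EOGraph V) (hsc : SCpair G) (hac : G.graph.IsAcyclic)
    (cc : V → Bool) (hccp : ∀ a b, G.graph.Adj a b → cc a ≠ cc b)
    (hccc : ∀ w, cc w = false → CloseVertex G w) :
    ¬ EOContains G P5_1432 := by
  intro h
  obtain ⟨q, hq, hadj, hord⟩ := extractPath G (by omega) ![1, 4, 3, 2, 0] (by decide)
    vn5b vn5bcompat h
  exact noP5config G hsc hac cc hccp hccc q hq hadj
    (hord 0 3 (by omega) (by omega) (by decide))
    (hord 3 1 (by omega) (by omega) (by decide))
    (hord 3 2 (by omega) (by omega) (by decide))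

end Stmt8Aux5

section Stmt8Aux6

open SimpleGraph

variable {V : Type} [Fintype V]

private lemma localmin_P4 (G : EOGraph V) (Q : ℕ → V) (K : ℕ)
    (hQinj : ∀ i ≤ K, ∀ j ≤ K, Q i = Q j → i = j)
    (hQadj : ∀ i, i < K → G.graph.Adj (Q i) (Q (i + 1)))
    (j : ℕ) (hj1 : 1 ≤ j) (hjk : j + 1 < K)
    (hm1 : G.label s(Q j, Q (j + 1)) < G.label s(Q (j - 1), Q j))
    (hm2 : G.label s(Q j, Q (j + 1)) < G.label s(Q (j + 1), Q (j + 2))) :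
    EOContains G P4_213 := by
  have e0 : G.graph.Adj (Q (j - 1)) (Q j) := by
    have := hQadj (j - 1) (by omega)
    rwa [show j - 1 + 1 = j from by omega] at this
  refine cP4 G (Q (j - 1)) (Q j) (Q (j + 1)) (Q (j + 2)) e0 (hQadj j (by omega))
    (hQadj (j + 1) (by omega)) ?_ ?_ ?_ hm1 hm2
  · intro h; exact absurd (hQinj (j - 1) (by omega) (j + 1) (by omega) h) (by omega)
  · intro h; exact absurd (hQinj (j - 1) (by omega) (j + 2) (by omega) h) (by omega)
  · intro h; exact absurd (hQinj j (by omega) (j + 2) (by omega) h) (by omega)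

private lemma acyclic_of (G : EOGraph V) (cc : V → Bool)
    (hccp : ∀ a b, G.graph.Adj a b → cc a ≠ cc b)
    (hnp4 : ¬ EOContains G P4_213) : G.graph.IsAcyclic := by
  classical
  rw [SimpleGraph.isAcyclic_iff_forall_adj_isBridge]
  intro x y hxy
  rw [SimpleGraph.isBridge_iff]
  refine fun hreach => ?_
  obtain ⟨w0⟩ := hreach
  obtain ⟨p, hpath⟩ := w0.toPath
  have hqinj := getVert_inj' p hpath
  have hq0 : p.getVert 0 = x := SimpleGraph.Walk.getVert_zero p
  have hqk : p.getVert p.length = y := SimpleGraph.Walk.getVert_length p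
  have hDadj : ∀ i, i < p.length →
      (G.graph \ SimpleGraph.fromEdgeSet {s(x, y)}).Adj (p.getVert i) (p.getVert (i + 1)) :=
    fun i hi => p.adj_getVert_succ hi
  have hGadj : ∀ i, i < p.length → G.graph.Adj (p.getVert i) (p.getVert (i + 1)) :=
    fun i hi => ((SimpleGraph.sdiff_adj _ _ _ _).mp (hDadj i hi)).1
  have hnechord : ∀ i, i < p.length → s(p.getVert i, p.getVert (i + 1)) ≠ s(x, y) := by
    intro i hi hcontra
    apply ((SimpleGraph.sdiff_adj _ _ _ _).mp (hDadj i hi)).2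
    rw [SimpleGraph.fromEdgeSet_adj]
    exact ⟨by rw [hcontra]; exact Set.mem_singleton _, (hDadj i hi).ne⟩
  have hk0 : p.length ≠ 0 := fun h => hxy.ne (SimpleGraph.Walk.eq_of_length_eq_zero h)
  have hk1 : p.length ≠ 1 := by
    intro h
    apply hnechord 0 (by omega)
    have hq1 : p.getVert 1 = y := by rw [← h]; exact hqk
    show s(p.getVert 0, p.getVert 1) = s(x, y)
    rw [hq0, hq1]
  by_cases hk2 : p.length = 2
  · have e1 : G.graph.Adj x (p.getVert 1) := by
      have := hGadj 0 (by omega)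
      rwa [hq0] at this
    have e2 : G.graph.Adj (p.getVert 1) y := by
      have := hGadj 1 (by omega)
      rwa [show p.getVert (1 + 1) = y from by
        rw [show (1 : ℕ) + 1 = p.length from by omega]; exact hqk] at this
    exact bool3 (hccp _ _ e1) (hccp _ _ e2) (hccp _ _ hxy)
  · have hk3 : 3 ≤ p.length := by omega
    have hEi : ∀ i, i < p.length → s(p.getVert i, p.getVert (i + 1)) ∈ G.graph.edgeSet :=
      fun i hi => G.graph.mem_edgeSet.mpr (hGadj i hi)
    have hchordE : s(x, y) ∈ G.graph.edgeSet := G.graph.mem_edgeSet.mpr hxy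
    have hFne : ∀ i, i < p.length → ∀ j, j < p.length → i ≠ j →
        G.label s(p.getVert i, p.getVert (i + 1)) ≠ G.label s(p.getVert j, p.getVert (j + 1)) := by
      intro i hi j hj hij
      apply label_ne G (hEi i hi) (hEi j hj)
      intro hcontra
      rw [Sym2.eq_iff] at hcontra
      rcases hcontra with ⟨h, h'⟩ | ⟨h, h'⟩
      · exact hij (hqinj i (by omega) j (by omega) h)
      · have hij1 : i = j + 1 := hqinj i (by omega) (j + 1) (by omega) h
        have hij2 : i + 1 = j := hqinj (i + 1) (by omega) j (by omega) h'
        omega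
    obtain ⟨j0, hj0S, hj0min⟩ := Set.exists_min_image {i : ℕ | i < p.length}
      (fun i => G.label s(p.getVert i, p.getVert (i + 1))) (Set.finite_Iio p.length)
      ⟨0, show (0 : ℕ) < p.length from by omega⟩
    have hj0k : j0 < p.length := hj0S
    have hchord_ne : ∀ i, i < p.length →
        G.label s(x, y) ≠ G.label s(p.getVert i, p.getVert (i + 1)) :=
      fun i hi => label_ne G hchordE (hEi i hi) (fun hc => hnechord i hi hc.symm)
    have hminlt : ∀ i, i < p.length → i ≠ j0 →
        G.label s(p.getVert j0, p.getVert (j0 + 1)) <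
          G.label s(p.getVert i, p.getVert (i + 1)) :=
      fun i hi hij => lt_of_le_of_ne (hj0min i hi) (hFne j0 hj0k i hi (Ne.symm hij))
    rcases (hchord_ne j0 hj0k).lt_or_gt with hlt | hlt
    · -- chord is minimal
      apply hnp4
      have e1 : G.graph.Adj (p.getVert 1) x := by
        have := hGadj 0 (by omega)
        rw [hq0] at this
        exact this.symm
      have e2 : G.graph.Adj y (p.getVert (p.length - 1)) := by
        have := hGadj (p.length - 1) (by omega)
        rw [show p.length - 1 + 1 = p.length from by omega, hqk] at this
        exact this.symm
      refine cP4 G (p.getVert 1) x y (p.getVert (p.length - 1)) e1 hxy e2 ?_ ?_ ?_ ?_ ?_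
      · intro hcontra
        exact absurd (hqinj 1 (by omega) p.length (by omega) (hcontra.trans hqk.symm)) (by omega)
      · intro hcontra
        exact absurd (hqinj 1 (by omega) (p.length - 1) (by omega) hcontra) (by omega)
      · intro hcontra
        exact absurd (hqinj 0 (by omega) (p.length - 1) (by omega) (hq0.trans hcontra)) (by omega)
      · rw [show s(p.getVert 1, x) = s(p.getVert 0, p.getVert (0 + 1)) from by
          rw [hq0]; exact Sym2.eq_swap]
        exact lt_of_lt_of_le hlt (hj0min 0 (show (0 : ℕ) < p.length from by omega))
      · rw [show s(y, p.getVert (p.length - 1)) =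
            s(p.getVert (p.length - 1), p.getVert (p.length - 1 + 1)) from by
          rw [show p.length - 1 + 1 = p.length from by omega, hqk]; exact Sym2.eq_swap]
        exact lt_of_lt_of_le hlt (hj0min (p.length - 1)
          (show p.length - 1 < p.length from by omega))
    · by_cases hj00 : j0 = 0
      · subst hj00
        apply hnp4
        have e0' : G.graph.Adj y (p.getVert 0) := by rw [hq0]; exact hxy.symm
        refine cP4 G y (p.getVert 0) (p.getVert 1) (p.getVert 2) e0' (hGadj 0 (by omega))
          (hGadj 1 (by omega)) ?_ ?_ ?_ ?_ ?_
        · intro hcontra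
          exact absurd (hqinj p.length (by omega) 1 (by omega) (hqk.trans hcontra)) (by omega)
        · intro hcontra
          exact absurd (hqinj p.length (by omega) 2 (by omega) (hqk.trans hcontra)) (by omega)
        · intro hcontra
          exact absurd (hqinj 0 (by omega) 2 (by omega) hcontra) (by omega)
        · rw [show s(y, p.getVert 0) = s(x, y) from by rw [hq0]; exact Sym2.eq_swap]
          exact hlt
        · exact hminlt 1 (by omega) (by omega)
      · by_cases hj0k1 : j0 = p.length - 1
        · subst hj0k1
          apply hnp4
          have e2 : G.graph.Adj (p.getVert (p.length - 1)) y := by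
            have := hGadj (p.length - 1) (by omega)
            rwa [show p.length - 1 + 1 = p.length from by omega, hqk] at this
          have e1 : G.graph.Adj (p.getVert (p.length - 2)) (p.getVert (p.length - 1)) := by
            have := hGadj (p.length - 2) (by omega)
            rwa [show p.length - 2 + 1 = p.length - 1 from by omega] at this
          refine cP4 G (p.getVert (p.length - 2)) (p.getVert (p.length - 1)) y x e1 e2
            hxy.symm ?_ ?_ ?_ ?_ ?_
          · intro hcontra
            exact absurd (hqinj (p.length - 2) (by omega) p.length (by omega)
              (hcontra.trans hqk.symm)) (by omega)
          · intro hcontra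
            exact absurd (hqinj (p.length - 2) (by omega) 0 (by omega)
              (hcontra.trans hq0.symm)) (by omega)
          · intro hcontra
            exact absurd (hqinj (p.length - 1) (by omega) 0 (by omega)
              (hcontra.trans hq0.symm)) (by omega)
          · rw [show s(p.getVert (p.length - 1), y) =
                s(p.getVert (p.length - 1), p.getVert (p.length - 1 + 1)) from by
              rw [show p.length - 1 + 1 = p.length from by omega, hqk]]
            have h0 := hminlt (p.length - 2) (by omega) (by omega)
            rwa [show p.length - 2 + 1 = p.length - 1 from by omega] at h0
          · rw [show s(p.getVert (p.length - 1), y) =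
                s(p.getVert (p.length - 1), p.getVert (p.length - 1 + 1)) from by
              rw [show p.length - 1 + 1 = p.length from by omega, hqk],
              show s(y, x) = s(x, y) from Sym2.eq_swap]
            exact hlt
        · apply hnp4
          have e0 : G.graph.Adj (p.getVert (j0 - 1)) (p.getVert j0) := by
            have := hGadj (j0 - 1) (by omega)
            rwa [show j0 - 1 + 1 = j0 from by omega] at this
          refine cP4 G (p.getVert (j0 - 1)) (p.getVert j0) (p.getVert (j0 + 1))
            (p.getVert (j0 + 2)) e0 (hGadj j0 (by omega)) (hGadj (j0 + 1) (by omega))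
            ?_ ?_ ?_ ?_ ?_
          · intro hcontra
            exact absurd (hqinj (j0 - 1) (by omega) (j0 + 1) (by omega) hcontra) (by omega)
          · intro hcontra
            exact absurd (hqinj (j0 - 1) (by omega) (j0 + 2) (by omega) hcontra) (by omega)
          · intro hcontra
            exact absurd (hqinj j0 (by omega) (j0 + 2) (by omega) hcontra) (by omega)
          · have h0 := hminlt (j0 - 1) (by omega) (by omega)
            rwa [show j0 - 1 + 1 = j0 from by omega] at h0
          · exact hminlt (j0 + 1) (by omega) (by omega)

end Stmt8Aux6

section Stmt8Aux7

open SimpleGraph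

variable {V : Type} [Fintype V]

private lemma backward (G : EOGraph V) (hconn : G.graph.Connected)
    (hnp4 : ¬ EOContains G P4_213) (hnp5a : ¬ EOContains G P5_1342)
    (hnp5b : ¬ EOContains G P5_1432) : SCpair G := by
  classical
  rintro e f ⟨he, hf, hef, hbet⟩
  by_cases hadje : EdgesAdjacent e f
  · exact Or.inl hadje
  right
  obtain ⟨x0, y0, he0⟩ := sym2_rep e
  obtain ⟨x1, y1, hf0⟩ := sym2_rep f
  have hSne : ({uv : V × V | uv.1 ∈ e ∧ uv.2 ∈ f}).Nonempty :=
    ⟨(x0, x1), by rw [he0]; exact Sym2.mem_mk_left _ _, by rw [hf0]; exact Sym2.mem_mk_left _ _⟩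
  obtain ⟨⟨a, b⟩, ⟨hae, hbf⟩, hmin⟩ := Set.exists_min_image
    {uv : V × V | uv.1 ∈ e ∧ uv.2 ∈ f} (fun uv => G.graph.dist uv.1 uv.2)
    (Set.toFinite _) hSne
  have hab : a ≠ b := by
    intro h
    exact hadje ⟨a, hae, by rw [h]; exact hbf⟩
  obtain ⟨a', hea'⟩ := Sym2.mem_iff_exists.mp hae
  obtain ⟨b', hfb'⟩ := Sym2.mem_iff_exists.mp hbf
  have ha'e : a' ∈ e := by rw [hea']; exact Sym2.mem_mk_right _ _
  have hb'f : b' ∈ f := by rw [hfb']; exact Sym2.mem_mk_right _ _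
  have haa' : a ≠ a' := by
    intro h
    apply G.graph.not_isDiag_of_mem_edgeSet he
    rw [hea', ← h]
    exact Sym2.mk_isDiag_iff.mpr rfl
  have hbb' : b ≠ b' := by
    intro h
    apply G.graph.not_isDiag_of_mem_edgeSet hf
    rw [hfb', ← h]
    exact Sym2.mk_isDiag_iff.mpr rfl
  have ha'b' : a' ≠ b' := fun h => hadje ⟨a', ha'e, by rw [h]; exact hb'f⟩
  obtain ⟨w, hwp, hwlen⟩ := (hconn.preconnected a b).exists_path_of_dist
  have hqinj := getVert_inj' w hwp
  have hwa : w.getVert 0 = a := SimpleGraph.Walk.getVert_zero w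
  have hwb : w.getVert w.length = b := SimpleGraph.Walk.getVert_length w
  have hk1 : 1 ≤ w.length := by
    by_contra hcontra
    push_neg at hcontra
    have h0 : w.length = 0 := by omega
    exact hab (SimpleGraph.Walk.eq_of_length_eq_zero h0)
  have hnota : ∀ v, v ∈ e → v ≠ a → v ∉ w.support := by
    intro v hv hva hmem
    have hsplit := congrArg SimpleGraph.Walk.length (w.take_spec hmem)
    rw [SimpleGraph.Walk.length_append] at hsplit
    have htake : 1 ≤ (w.takeUntil v hmem).length := by
      by_contra hcontra
      push_neg at hcontra
      have h0 : (w.takeUntil v hmem).length = 0 := by omega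
      exact hva (SimpleGraph.Walk.eq_of_length_eq_zero h0).symm
    have hd2 := SimpleGraph.dist_le (w.dropUntil v hmem)
    have hge : G.graph.dist a b ≤ G.graph.dist v b := hmin (v, b) ⟨hv, hbf⟩
    omega
  have hnotb : ∀ v, v ∈ f → v ≠ b → v ∉ w.support := by
    intro v hv hvb hmem
    have hsplit := congrArg SimpleGraph.Walk.length (w.take_spec hmem)
    rw [SimpleGraph.Walk.length_append] at hsplit
    have hdrop : 1 ≤ (w.dropUntil v hmem).length := by
      by_contra hcontra
      push_neg at hcontra
      have h0 : (w.dropUntil v hmem).length = 0 := by omega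
      exact hvb (SimpleGraph.Walk.eq_of_length_eq_zero h0)
    have hd2 := SimpleGraph.dist_le (w.takeUntil v hmem)
    have hge : G.graph.dist a b ≤ G.graph.dist a v := hmin (a, v) ⟨hae, hv⟩
    omega
  have ha'supp : a' ∉ w.support := hnota a' ha'e (Ne.symm haa')
  have hb'supp : b' ∉ w.support := hnotb b' hb'f (Ne.symm hbb')
  set Q : ℕ → V := fun i =>
    Nat.casesOn i a' (fun j => if j ≤ w.length then w.getVert j else b') with hQdef
  have hQ0 : Q 0 = a' := rfl
  have hQs : ∀ j, Q (j + 1) = if j ≤ w.length then w.getVert j else b' := fun j => rfl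
  have hQmid : ∀ i, 1 ≤ i → i ≤ w.length + 1 → Q i = w.getVert (i - 1) := by
    intro i h1 h2
    obtain ⟨j, rfl⟩ : ∃ j, i = j + 1 := ⟨i - 1, by omega⟩
    rw [hQs j, if_pos (show j ≤ w.length from by omega)]
    rfl
  have hQlast : Q (w.length + 2) = b' := by
    rw [show w.length + 2 = (w.length + 1) + 1 from rfl, hQs, if_neg (by omega)]
  have hQ1 : Q 1 = a := by rw [hQmid 1 (by omega) (by omega)]; exact hwa
  have hQk1 : Q (w.length + 1) = b := by
    rw [hQmid (w.length + 1) (by omega) (by omega),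
      show w.length + 1 - 1 = w.length from by omega]
    exact hwb
  have hmm : ∀ i, 1 ≤ i → i ≤ w.length + 1 → Q i ∈ w.support := by
    intro i h1 h2
    rw [hQmid i h1 h2, SimpleGraph.Walk.mem_support_iff_exists_getVert]
    exact ⟨i - 1, rfl, by omega⟩
  have hQinj : ∀ i ≤ w.length + 2, ∀ j ≤ w.length + 2, Q i = Q j → i = j := by
    intro i hi j hj hij
    by_cases hi0 : i = 0 <;> by_cases hj0 : j = 0
    · omega
    · exfalso
      subst hi0
      by_cases hjlast : j = w.length + 2
      · subst hjlast
        rw [hQ0, hQlast] at hij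
        exact ha'b' hij
      · apply ha'supp
        rw [hQ0] at hij
        rw [hij]
        exact hmm j (by omega) (by omega)
    · exfalso
      subst hj0
      by_cases hilast : i = w.length + 2
      · subst hilast
        rw [hQlast, hQ0] at hij
        exact ha'b' hij.symm
      · apply ha'supp
        rw [hQ0] at hij
        rw [← hij]
        exact hmm i (by omega) (by omega)
    · by_cases hilast : i = w.length + 2 <;> by_cases hjlast : j = w.length + 2
      · omega
      · exfalso
        subst hilast
        apply hb'supp
        rw [hQlast] at hij
        rw [hij]
        exact hmm j (by omega) (by omega)
      · exfalso
        subst hjlast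
        apply hb'supp
        rw [hQlast] at hij
        rw [← hij]
        exact hmm i (by omega) (by omega)
      · rw [hQmid i (by omega) (by omega), hQmid j (by omega) (by omega)] at hij
        have := hqinj (i - 1) (by omega) (j - 1) (by omega) hij
        omega
  have hQadj : ∀ i, i < w.length + 2 → G.graph.Adj (Q i) (Q (i + 1)) := by
    intro i hi
    by_cases h0 : i = 0
    · subst h0
      have hadjaa' : G.graph.Adj a a' := (G.graph.mem_edgeSet).mp (by rw [← hea']; exact he)
      show G.graph.Adj (Q 0) (Q 1)
      rw [hQ0, hQ1]
      exact hadjaa'.symm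
    · by_cases hlast : i = w.length + 1
      · subst hlast
        have hadjbb' : G.graph.Adj b b' := (G.graph.mem_edgeSet).mp (by rw [← hfb']; exact hf)
        show G.graph.Adj (Q (w.length + 1)) (Q (w.length + 2))
        rw [hQk1, hQlast]
        exact hadjbb'
      · have e1 := hQmid i (by omega) (by omega)
        have e2 : Q (i + 1) = w.getVert i := by
          rw [hQmid (i + 1) (by omega) (by omega)]
          rfl
        have hstep := w.adj_getVert_succ (show i - 1 < w.length from by omega)
        rw [show i - 1 + 1 = i from by omega] at hstep
        rw [e1, e2]
        exact hstep
  have hQE : ∀ i, i < w.length + 2 → s(Q i, Q (i + 1)) ∈ G.graph.edgeSet :=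
    fun i hi => G.graph.mem_edgeSet.mpr (hQadj i hi)
  have hF0 : s(Q 0, Q 1) = e := by rw [hQ0, hQ1, hea']; exact Sym2.eq_swap
  have hFlast : s(Q (w.length + 1), Q (w.length + 2)) = f := by
    rw [hQk1, hQlast]
    exact hfb'.symm
  have hQEd : ∀ i, i < w.length + 2 → ∀ j, j < w.length + 2 → i ≠ j →
      G.label s(Q i, Q (i + 1)) ≠ G.label s(Q j, Q (j + 1)) := by
    intro i hi j hj hij
    apply label_ne G (hQE i hi) (hQE j hj)
    intro hcontra
    rw [Sym2.eq_iff] at hcontra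
    rcases hcontra with ⟨h, h'⟩ | ⟨h, h'⟩
    · exact hij (hQinj i (by omega) j (by omega) h)
    · have h1 := hQinj i (by omega) (j + 1) (by omega) h
      have h2 := hQinj (i + 1) (by omega) j (by omega) h'
      omega
  have hdich : ∀ i, 1 ≤ i → i ≤ w.length →
      G.label s(Q i, Q (i + 1)) < G.label e ∨ G.label f < G.label s(Q i, Q (i + 1)) := by
    intro i h1 h2
    have hne_e : s(Q i, Q (i + 1)) ≠ e := by
      intro hcontra
      have hmema : a' ∈ s(Q i, Q (i + 1)) := by rw [hcontra]; exact ha'e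
      rw [Sym2.mem_iff] at hmema
      rcases hmema with h | h
      · exact absurd (hQinj 0 (by omega) i (by omega) (by rw [hQ0]; exact h)) (by omega)
      · exact absurd (hQinj 0 (by omega) (i + 1) (by omega) (by rw [hQ0]; exact h)) (by omega)
    have hne_f : s(Q i, Q (i + 1)) ≠ f := by
      intro hcontra
      have hmemb : b' ∈ s(Q i, Q (i + 1)) := by rw [hcontra]; exact hb'f
      rw [Sym2.mem_iff] at hmemb
      rcases hmemb with h | h
      · exact absurd (hQinj (w.length + 2) (by omega) i (by omega)
          (by rw [hQlast]; exact h)) (by omega)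
      · exact absurd (hQinj (w.length + 2) (by omega) (i + 1) (by omega)
          (by rw [hQlast]; exact h)) (by omega)
    rcases lt_trichotomy (G.label s(Q i, Q (i + 1))) (G.label e) with h | h | h
    · exact Or.inl h
    · exact absurd (G.inj _ (hQE i (by omega)) _ he h) hne_e
    · rcases lt_trichotomy (G.label s(Q i, Q (i + 1))) (G.label f) with h' | h' | h'
      · exact absurd ⟨_, hQE i (by omega), h, h'⟩ hbet
      · exact absurd (G.inj _ (hQE i (by omega)) _ hf h') hne_f
      · exact Or.inr h'
  by_cases hsmall : ∃ i, 1 ≤ i ∧ i ≤ w.length ∧ G.label s(Q i, Q (i + 1)) < G.label e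
  · exfalso
    obtain ⟨i0, hi01, hi0k, hi0lt⟩ := hsmall
    obtain ⟨j0, hj0S, hj0min⟩ := Set.exists_min_image {i : ℕ | 1 ≤ i ∧ i ≤ w.length}
      (fun i => G.label s(Q i, Q (i + 1)))
      (Set.Finite.subset (Set.finite_Iio (w.length + 1))
        (fun t ht => by
          have ht' : 1 ≤ t ∧ t ≤ w.length := ht
          simp only [Set.mem_Iio]; omega))
      ⟨i0, ⟨hi01, hi0k⟩⟩
    obtain ⟨hj01, hj0k⟩ := hj0S
    have hminlt : ∀ i, i < w.length + 2 → i ≠ j0 →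
        G.label s(Q j0, Q (j0 + 1)) < G.label s(Q i, Q (i + 1)) := by
      intro i hi hine
      by_cases h0 : i = 0
      · subst h0
        have hv0 : G.label s(Q 0, Q (0 + 1)) = G.label e := by
          rw [show s(Q 0, Q (0 + 1)) = e from hF0]
        rw [hv0]
        exact lt_of_le_of_lt (hj0min i0 ⟨hi01, hi0k⟩) hi0lt
      · by_cases hlast : i = w.length + 1
        · subst hlast
          have hv1 : G.label s(Q (w.length + 1), Q (w.length + 1 + 1)) = G.label f := by
            rw [show s(Q (w.length + 1), Q (w.length + 1 + 1)) = f from hFlast]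
          rw [hv1]
          exact lt_trans (lt_of_le_of_lt (hj0min i0 ⟨hi01, hi0k⟩) hi0lt) hef
        · exact lt_of_le_of_ne (hj0min i ⟨by omega, by omega⟩)
            (hQEd j0 (by omega) i (by omega) (Ne.symm hine))
    have hL := hminlt (j0 - 1) (by omega) (by omega)
    rw [show j0 - 1 + 1 = j0 from by omega] at hL
    exact hnp4 (localmin_P4 G Q (w.length + 2) hQinj hQadj j0 (by omega) (by omega) hL
      (hminlt (j0 + 1) (by omega) (by omega)))
  · push_neg at hsmall
    have hbig : ∀ i, 1 ≤ i → i ≤ w.length → G.label f < G.label s(Q i, Q (i + 1)) := by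
      intro i h1 h2
      rcases hdich i h1 h2 with h | h
      · exact absurd h (not_lt.mpr (hsmall i h1 h2))
      · exact h
    by_cases hk1' : w.length = 1
    · have hQ2b : Q (1 + 1) = b := by
        rw [show (1 : ℕ) + 1 = w.length + 1 from by omega]
        exact hQk1
      have hmemE := hQE 1 (by omega)
      rw [hQ1, hQ2b] at hmemE
      have hb1 := hbig 1 (by omega) (by omega)
      rw [hQ1, hQ2b] at hb1
      exact ⟨a, b, hmemE, hae, hbf, lt_trans hef hb1, hb1⟩
    · exfalso
      have hk2 : 2 ≤ w.length := by omega
      obtain ⟨m1, hm1S, hm1max⟩ := Set.exists_max_image {i : ℕ | 1 ≤ i ∧ i ≤ w.length}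
        (fun i => G.label s(Q i, Q (i + 1)))
        (Set.Finite.subset (Set.finite_Iio (w.length + 1))
          (fun t ht => by
            have ht' : 1 ≤ t ∧ t ≤ w.length := ht
            simp only [Set.mem_Iio]; omega))
        ⟨1, ⟨by omega, by omega⟩⟩
      obtain ⟨hm11, hm1k⟩ := hm1S
      have hSne2 : ({i : ℕ | (1 ≤ i ∧ i ≤ w.length) ∧ i ≠ m1}).Nonempty := by
        rcases eq_or_ne m1 1 with h | h
        · exact ⟨2, ⟨by omega, by omega⟩, by omega⟩
        · exact ⟨1, ⟨by omega, by omega⟩, by omega⟩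
      obtain ⟨m2, hm2S, hm2max⟩ := Set.exists_max_image
        {i : ℕ | (1 ≤ i ∧ i ≤ w.length) ∧ i ≠ m1}
        (fun i => G.label s(Q i, Q (i + 1)))
        (Set.Finite.subset (Set.finite_Iio (w.length + 1))
          (fun t ht => by
            have ht' : (1 ≤ t ∧ t ≤ w.length) ∧ t ≠ m1 := ht
            simp only [Set.mem_Iio]; omega))
        hSne2
      obtain ⟨⟨hm21, hm2k⟩, hm2ne⟩ := hm2S
      have hm2lt_m1 : G.label s(Q m2, Q (m2 + 1)) < G.label s(Q m1, Q (m1 + 1)) :=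
        lt_of_le_of_ne (hm1max m2 ⟨hm21, hm2k⟩) (hQEd m2 (by omega) m1 (by omega) hm2ne)
      have hlow : ∀ i, i < w.length + 2 → i ≠ m1 → i ≠ m2 →
          G.label s(Q i, Q (i + 1)) < G.label s(Q m2, Q (m2 + 1)) := by
        intro i hi hne1 hne2
        by_cases h0 : i = 0
        · subst h0
          have hv0 : G.label s(Q 0, Q (0 + 1)) = G.label e := by
            rw [show s(Q 0, Q (0 + 1)) = e from hF0]
          rw [hv0]
          exact lt_trans hef (hbig m2 hm21 hm2k)
        · by_cases hlast : i = w.length + 1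
          · subst hlast
            have hv1 : G.label s(Q (w.length + 1), Q (w.length + 1 + 1)) = G.label f := by
              rw [show s(Q (w.length + 1), Q (w.length + 1 + 1)) = f from hFlast]
            rw [hv1]
            exact hbig m2 hm21 hm2k
          · exact lt_of_le_of_ne (hm2max i ⟨⟨by omega, by omega⟩, hne1⟩)
              (hQEd i (by omega) m2 (by omega) hne2)
      by_cases hadjpos : m1 + 1 = m2 ∨ m2 + 1 = m1
      · obtain ⟨d, hd⟩ : ∃ d, min m1 m2 = d + 1 := ⟨min m1 m2 - 1, by omega⟩
        have hdm : (d + 1 = m1 ∧ d + 2 = m2) ∨ (d + 1 = m2 ∧ d + 2 = m1) := by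
          rcases hadjpos with h | h
          · exact Or.inl ⟨by omega, by omega⟩
          · exact Or.inr ⟨by omega, by omega⟩
        have hm1val : m1 = d + 1 ∨ m1 = d + 2 := by
          rcases hdm with ⟨h1, h2⟩ | ⟨h1, h2⟩
          · exact Or.inl h1.symm
          · exact Or.inr h2.symm
        have hm2val : m2 = d + 1 ∨ m2 = d + 2 := by
          rcases hdm with ⟨h1, h2⟩ | ⟨h1, h2⟩
          · exact Or.inr h2.symm
          · exact Or.inl h1.symm
        have hbound : d + 2 ≤ w.length := by
          rcases hm1val with h | h <;> rcases hm2val with h' | h' <;> omega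
        have hdne1 : d ≠ m1 := by rcases hm1val with h | h <;> omega
        have hdne2 : d ≠ m2 := by rcases hm2val with h | h <;> omega
        have hd3ne1 : d + 3 ≠ m1 := by rcases hm1val with h | h <;> omega
        have hd3ne2 : d + 3 ≠ m2 := by rcases hm2val with h | h <;> omega
        have hmidval : ∀ t, (t = d + 1 ∨ t = d + 2) → ∀ i, i < w.length + 2 → i ≠ m1 →
            i ≠ m2 → G.label s(Q i, Q (i + 1)) < G.label s(Q t, Q (t + 1)) := by
          intro t ht i hi hne1 hne2
          have hbase := hlow i hi hne1 hne2
          rcases ht with rfl | rfl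
          · rcases hdm with ⟨h1, h2⟩ | ⟨h1, h2⟩
            · rw [h1]; exact lt_trans hbase hm2lt_m1
            · rw [h1]; exact hbase
          · rcases hdm with ⟨h1, h2⟩ | ⟨h1, h2⟩
            · rw [h2]; exact hbase
            · rw [h2]; exact lt_trans hbase hm2lt_m1
        have hwinq : ∀ i < 5, ∀ j < 5, Q (d + i) = Q (d + j) → i = j := by
          intro i hi j hj hij
          have := hQinj (d + i) (by omega) (d + j) (by omega) hij
          omega
        have hwinadj : ∀ i : ℕ, i + 1 < 5 → G.graph.Adj (Q (d + i)) (Q (d + (i + 1))) := by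
          intro i hi
          have := hQadj (d + i) (by omega)
          rwa [show d + i + 1 = d + (i + 1) from by omega] at this
        have h12 := hmidval (d + 1) (Or.inl rfl) d (by omega) hdne1 hdne2
        have h13 := hmidval (d + 2) (Or.inr rfl) d (by omega) hdne1 hdne2
        have h42 := hmidval (d + 1) (Or.inl rfl) (d + 3) (by omega) hd3ne1 hd3ne2
        have h43 := hmidval (d + 2) (Or.inr rfl) (d + 3) (by omega) hd3ne1 hd3ne2
        rcases cP5 G (fun n => Q (d + n)) hwinq hwinadj h12 h13 h42 h43 with hcon | hcon
        · exact hnp5a hcon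
        · exact hnp5b hcon
      · push_neg at hadjpos
        have hne12 : m1 ≠ m2 := fun h => hm2ne h.symm
        have hgap : min m1 m2 + 2 ≤ max m1 m2 := by omega
        obtain ⟨j1, hj1S, hj1min⟩ := Set.exists_min_image
          {i : ℕ | min m1 m2 + 1 ≤ i ∧ i ≤ max m1 m2 - 1}
          (fun i => G.label s(Q i, Q (i + 1)))
          (Set.Finite.subset (Set.finite_Iio (w.length + 1))
            (fun t ht => by
              have ht' : min m1 m2 + 1 ≤ t ∧ t ≤ max m1 m2 - 1 := ht
              simp only [Set.mem_Iio]; omega))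
          ⟨min m1 m2 + 1, ⟨by omega, by omega⟩⟩
        obtain ⟨hj1lo, hj1hi⟩ := hj1S
        have hj1ne1 : j1 ≠ m1 := by omega
        have hj1ne2 : j1 ≠ m2 := by omega
        have hj1a : 1 ≤ j1 := by omega
        have hj1b : j1 + 1 < w.length + 2 := by omega
        have hnb : ∀ t, (t = j1 - 1 ∨ t = j1 + 1) →
            G.label s(Q j1, Q (j1 + 1)) < G.label s(Q t, Q (t + 1)) := by
          intro t ht
          by_cases hseg : min m1 m2 + 1 ≤ t ∧ t ≤ max m1 m2 - 1
          · refine lt_of_le_of_ne (hj1min t hseg) (hQEd j1 (by omega) t (by omega) ?_)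
            omega
          · have htm : t = m1 ∨ t = m2 := by omega
            have hj1low := hlow j1 (by omega) hj1ne1 hj1ne2
            rcases htm with h | h
            · rw [h]; exact lt_trans hj1low hm2lt_m1
            · rw [h]; exact hj1low
        have hL := hnb (j1 - 1) (Or.inl rfl)
        rw [show j1 - 1 + 1 = j1 from by omega] at hL
        exact hnp4 (localmin_P4 G Q (w.length + 2) hQinj hQadj j1 hj1a hj1b hL
          (hnb (j1 + 1) (Or.inr rfl)))

end Stmt8Aux7

/-- An edge-ordered graph of order chromatic number 2 is a semi-caterpillar iff
it is connected and contains none of `P₄^{213}`, `P₅^{1342}`, `P₅^{1432}`. -/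
theorem stmt_8 {V : Type} [Fintype V] (G : EOGraph V) (h2 : HasOrderChrom2 G) :
    IsSemiCaterpillar G ↔
      G.graph.Connected ∧ ¬ EOContains G P4_213 ∧ ¬ EOContains G P5_1342 ∧
        ¬ EOContains G P5_1432 := by
  constructor
  · intro hsemi
    obtain ⟨htree, hne, hsc'⟩ := hsemi
    have hsc : SCpair G := hsc'
    obtain ⟨cc, hccp, hccc⟩ := lex_coloring G h2
    exact ⟨htree.isConnected, noP4 G hsc htree.IsAcyclic,
      noP5a G hsc htree.IsAcyclic cc hccp hccc, noP5b G hsc htree.IsAcyclic cc hccp hccc⟩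
  · rintro ⟨hconn, hnp4, hnp5a', hnp5b'⟩
    obtain ⟨cc, hccp, hccc⟩ := lex_coloring G h2
    have hac : G.graph.IsAcyclic := acyclic_of G cc hccp hnp4
    exact ⟨⟨hconn, hac⟩, edges_nonempty G h2, backward G hconn hnp4 hnp5a' hnp5b'⟩
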